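/- arXiv:2005.02625 — 7 statements merged into one kernel-verified Lean document; each statement's English description precedes it below -/
import Mathlib

section
/- Let Φ be a simply laced root system with all roots of squared length 2, α ∈ Φ and λ ∈ Λ_i for some -2 ≤ i ≤ 2. Then there exists β ∈ Φ with α + β = λ if and only if κ(α,λ) = 2+i. -/
open scoped RealInnerProductSpace

/-- In an irreducible simply laced root system (roots of squared length 2),
for a root `α` and `λ ∈ Λ_i` (`-2 ≤ i ≤ 2`), there exists a root `β` with
`α + β = λ` if and only if `κ(α,λ) = 2 + i`. -/
theorem exists_root_summand_iff (V : Type*) [NormedAddCommGroup V]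
    [InnerProductSpace ℝ V] [FiniteDimensional ℝ V]
    (Φ : Finset V)
    (h0 : (0 : V) ∉ Φ)
    (hlen : ∀ α ∈ Φ, ⟪α, α⟫ = 2)
    (hneg : ∀ α ∈ Φ, -α ∈ Φ)
    (hred : ∀ α ∈ Φ, ∀ t : ℝ, t • α ∈ Φ → t = 1 ∨ t = -1)
    (hint : ∀ α ∈ Φ, ∀ β ∈ Φ, ∃ n : ℤ, ⟪α, β⟫ = n)
    (hrefl : ∀ α ∈ Φ, ∀ β ∈ Φ, β - ⟪β, α⟫ • α ∈ Φ)
    (α : V) (hα : α ∈ Φ)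
    (i : ℤ) (hi₁ : -2 ≤ i) (hi₂ : i ≤ 2)
    (lam : V) (hlam : ∃ γ ∈ Φ, ∃ δ ∈ Φ, ⟪γ, δ⟫ = (i : ℝ) ∧ lam = γ + δ) :
    (∃ β ∈ Φ, α + β = lam) ↔ ⟪α, lam⟫ = 2 + (i : ℝ) := by
  obtain ⟨γ, hγ, δ, hδ, hgd, rfl⟩ := hlam
  have hαα := hlen α hα
  have hγγ := hlen γ hγ
  have hδδ := hlen δ hδ
  constructor
  · rintro ⟨β, hβ, hsum⟩
    have hββ := hlen β hβ
    have h1 : ⟪α + β, α + β⟫ = ⟪γ + δ, γ + δ⟫ := by rw [hsum]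
    have h2 : ⟪α, α + β⟫ = ⟪α, γ + δ⟫ := by rw [hsum]
    simp only [inner_add_left, inner_add_right] at h1 h2 ⊢
    have hc1 := real_inner_comm α β
    have hc2 := real_inner_comm γ δ
    linarith [h1, h2]
  · intro hκ
    obtain ⟨na, ha⟩ := hint α hα γ hγ
    obtain ⟨nb, hb⟩ := hint α hα δ hδ
    have hab : (na : ℝ) + nb = 2 + i := by
      rw [inner_add_right, ha, hb] at hκ; exact hκ
    have habZ : na + nb = 2 + i := by exact_mod_cast hab
    have hna2 : na ≤ 2 := by
      have h := real_inner_self_nonneg (x := α - γ)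
      simp only [inner_sub_left, inner_sub_right] at h
      have hc := real_inner_comm γ α
      have : (na : ℝ) ≤ 2 := by linarith [ha]
      exact_mod_cast this
    have hnb2 : nb ≤ 2 := by
      have h := real_inner_self_nonneg (x := α - δ)
      simp only [inner_sub_left, inner_sub_right] at h
      have hc := real_inner_comm δ α
      have : (nb : ℝ) ≤ 2 := by linarith [hb]
      exact_mod_cast this
    by_cases hna : na = 2
    · -- α = γ, take β = δ
      have hag : α = γ := by
        have h : ⟪α - γ, α - γ⟫ = 0 := by
          simp only [inner_sub_left, inner_sub_right]
          have hc : ⟪γ, α⟫ = (2 : ℝ) := by rw [real_inner_comm, ha, hna]; norm_num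
          have hc' : ⟪α, γ⟫ = (2 : ℝ) := by rw [ha, hna]; norm_num
          linarith
        exact sub_eq_zero.mp (inner_self_eq_zero.mp h)
      exact ⟨δ, hδ, by rw [hag]⟩
    · by_cases hnb : nb = 2
      · -- α = δ, take β = γ
        have had : α = δ := by
          have h : ⟪α - δ, α - δ⟫ = 0 := by
            simp only [inner_sub_left, inner_sub_right]
            have hc : ⟪δ, α⟫ = (2 : ℝ) := by rw [real_inner_comm, hb, hnb]; norm_num
            have hc' : ⟪α, δ⟫ = (2 : ℝ) := by rw [hb, hnb]; norm_num
            linarith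
          exact sub_eq_zero.mp (inner_self_eq_zero.mp h)
        exact ⟨γ, hγ, by rw [had]; abel⟩
      · by_cases hna1 : na = 1
        · -- γ - α ∈ Φ, then (γ - α) + δ ∈ Φ
          have hga : ⟪γ, α⟫ = 1 := by
            rw [real_inner_comm, ha, hna1]; norm_num
          have hμ : γ - α ∈ Φ := by
            have := hrefl α hα γ hγ
            rwa [hga, one_smul] at this
          have hdm : ⟪δ, γ - α⟫ = -1 := by
            have hnb1 : (nb : ℝ) = 1 + i := by exact_mod_cast (by omega : nb = 1 + i)
            have h1 : ⟪δ, γ⟫ = (i : ℝ) := by rw [real_inner_comm]; exact hgd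
            have h2 : ⟪δ, α⟫ = (nb : ℝ) := by rw [real_inner_comm]; exact hb
            rw [inner_sub_right]; linarith
          have hβ := hrefl _ hμ δ hδ
          rw [hdm] at hβ
          refine ⟨δ - (α - γ), ?_, by abel⟩
          simpa using hβ
        · by_cases hnb1 : nb = 1
          · have hda : ⟪δ, α⟫ = 1 := by
              rw [real_inner_comm, hb, hnb1]; norm_num
            have hμ : δ - α ∈ Φ := by
              have := hrefl α hα δ hδ
              rwa [hda, one_smul] at this
            have hgm : ⟪γ, δ - α⟫ = -1 := by
              have hna1' : (na : ℝ) = 1 + i := by exact_mod_cast (by omega : na = 1 + i)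
              have h2 : ⟪γ, α⟫ = (na : ℝ) := by rw [real_inner_comm]; exact ha
              rw [inner_sub_right]; linarith
            have hβ := hrefl _ hμ γ hγ
            rw [hgm] at hβ
            refine ⟨γ - (α - δ), ?_, by abel⟩
            simpa using hβ
          · -- na ≤ 0 and nb ≤ 0, forcing i = -2 and γ + δ = 0
            have hi : i = -2 := by omega
            have hsum0 : γ + δ = 0 := by
              have h : ⟪γ + δ, γ + δ⟫ = 0 := by
                simp only [inner_add_left, inner_add_right]
                have hdg : ⟪δ, γ⟫ = (i : ℝ) := by rw [real_inner_comm]; exact hgd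
                have hir : (i : ℝ) = -2 := by rw [hi]; norm_num
                linarith
              exact inner_self_eq_zero.mp h
            exact ⟨-α, hneg α hα, by rw [hsum0]; abel⟩
end

section
/- Let Φ be a simply laced root system and λ a sum of two orthogonal roots (λ ∈ Λ_0). Then n_λ ≥ 2, i.e., there are at least two distinct unordered pairs {α,β} of roots with α+β = λ. -/
open scoped RealInnerProductSpace

lemma pm_one_aux (V : Type*) [NormedAddCommGroup V]
    [InnerProductSpace ℝ V]
    (Φ : Finset V)
    (hlen : ∀ α ∈ Φ, ⟪α, α⟫ = 2)
    (hint : ∀ α ∈ Φ, ∀ β ∈ Φ, ∃ n : ℤ, ⟪α, β⟫ = n)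
    {γ α : V} (hγ : γ ∈ Φ) (hα : α ∈ Φ)
    (hne : γ ≠ α) (hne' : γ ≠ -α) (hnz : ⟪γ, α⟫ ≠ 0) :
    ⟪γ, α⟫ = 1 ∨ ⟪γ, α⟫ = -1 := by
  obtain ⟨n, hn⟩ := hint γ hγ α hα
  have hγγ := hlen γ hγ
  have hαα := hlen α hα
  have hcs : |⟪γ, α⟫| ≤ 2 := by
    have h1 : |⟪γ, α⟫| ≤ ‖γ‖ * ‖α‖ := abs_real_inner_le_norm γ α
    have h2 : (‖γ‖ * ‖α‖) ^ 2 = 4 := by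
      have := real_inner_self_eq_norm_mul_norm γ
      have := real_inner_self_eq_norm_mul_norm α
      nlinarith
    have h3 : (0:ℝ) ≤ ‖γ‖ * ‖α‖ := by positivity
    nlinarith [abs_nonneg ⟪γ, α⟫]
  have hne2 : ⟪γ, α⟫ ≠ 2 := by
    intro h
    apply hne
    have h4 : ⟪γ - α, γ - α⟫ = 0 := by
      simp only [inner_sub_left, inner_sub_right]
      linarith [real_inner_comm α γ]
    exact sub_eq_zero.mp (inner_self_eq_zero.mp h4)
  have hne3 : ⟪γ, α⟫ ≠ -2 := by
    intro h
    apply hne'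
    have h4 : ⟪γ + α, γ + α⟫ = 0 := by
      simp only [inner_add_left, inner_add_right]
      linarith [real_inner_comm α γ]
    have := inner_self_eq_zero.mp h4
    have : γ = -α := by
      have := add_eq_zero_iff_eq_neg.mp this
      exact this
    exact this
  -- now n ∈ {-1, 1}
  have hn2 : |n| ≤ 2 := by
    have : |(n:ℝ)| ≤ 2 := by rw [← hn]; exact hcs
    exact_mod_cast this
  have : n ≠ 0 := by rintro rfl; simp at hn; exact hnz hn
  have : n ≠ 2 := by rintro rfl; exact hne2 (by exact_mod_cast hn)
  have : n ≠ -2 := by rintro rfl; exact hne3 (by rw [hn]; norm_num)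
  have hn3 := abs_le.mp hn2
  have : n = 1 ∨ n = -1 := by omega
  rcases this with h | h <;> [left; right] <;> rw [hn, h] <;> norm_num

/-- In an irreducible simply laced root system, if `λ` is a sum of two
orthogonal roots then there are at least two distinct unordered pairs of
roots summing to `λ` (i.e. `n_λ ≥ 2`). -/
theorem at_least_two_pairs (V : Type*) [NormedAddCommGroup V]
    [InnerProductSpace ℝ V] [FiniteDimensional ℝ V]
    (Φ : Finset V)
    (h0 : (0 : V) ∉ Φ)
    (hlen : ∀ α ∈ Φ, ⟪α, α⟫ = 2)
    (hneg : ∀ α ∈ Φ, -α ∈ Φ)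
    (hred : ∀ α ∈ Φ, ∀ t : ℝ, t • α ∈ Φ → t = 1 ∨ t = -1)
    (hint : ∀ α ∈ Φ, ∀ β ∈ Φ, ∃ n : ℤ, ⟪α, β⟫ = n)
    (hrefl : ∀ α ∈ Φ, ∀ β ∈ Φ, β - ⟪β, α⟫ • α ∈ Φ)
    (hirr : ∀ S ⊆ Φ, (∀ a ∈ S, ∀ b ∈ Φ, b ∉ S → ⟪a, b⟫ = 0) → S = ∅ ∨ S = Φ)
    (lam : V) (hlam : ∃ α ∈ Φ, ∃ β ∈ Φ, ⟪α, β⟫ = 0 ∧ lam = α + β) :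
    ∃ α ∈ Φ, ∃ β ∈ Φ, ∃ γ ∈ Φ, ∃ δ ∈ Φ,
      α + β = lam ∧ γ + δ = lam ∧ ({α, β} : Set V) ≠ ({γ, δ} : Set V) := by
  classical
  obtain ⟨α, hα, β, hβ, horth, hsum⟩ := hlam
  -- the non-orthogonality graph
  set r : V → V → Prop := fun x y => x ∈ Φ ∧ y ∈ Φ ∧ ⟪x, y⟫ ≠ 0 with hr
  -- connectivity of the graph, via irreducibility
  have hconn : Relation.ReflTransGen r α β := by
    set S : Finset V := Φ.filter (fun x => Relation.ReflTransGen r α x) with hS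
    have hsub : S ⊆ Φ := Finset.filter_subset _ _
    have hbd : ∀ a ∈ S, ∀ b ∈ Φ, b ∉ S → ⟪a, b⟫ = 0 := by
      intro a ha b hbΦ hbS
      by_contra hne
      have haΦ : a ∈ Φ := hsub ha
      have hra : Relation.ReflTransGen r α a := (Finset.mem_filter.mp ha).2
      exact hbS (Finset.mem_filter.mpr ⟨hbΦ, hra.tail ⟨haΦ, hbΦ, hne⟩⟩)
    rcases hirr S hsub hbd with h | h
    · exfalso
      have : α ∈ S := Finset.mem_filter.mpr ⟨hα, Relation.ReflTransGen.refl⟩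
      rw [h] at this
      exact absurd this (Finset.notMem_empty α)
    · have : β ∈ S := by rw [h]; exact hβ
      exact (Finset.mem_filter.mp this).2
  -- invariant along paths: anything reachable from α either meets α or
  -- has a common neighbour with α
  have key : ∀ z, Relation.ReflTransGen r α z →
      (⟪z, α⟫ ≠ 0 ∨ ∃ γ ∈ Φ, ⟪γ, α⟫ ≠ 0 ∧ ⟪γ, z⟫ ≠ 0) := by
    intro z hz
    induction hz with
    | refl => left; rw [hlen α hα]; norm_num
    | @tail y c hy hyc ih =>
      obtain ⟨hyΦ, hcΦ, hyc0⟩ := hyc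
      by_cases hcα : ⟪c, α⟫ ≠ 0
      · exact Or.inl hcα
      push_neg at hcα
      right
      by_cases hyα : ⟪y, α⟫ ≠ 0
      · exact ⟨y, hyΦ, hyα, hyc0⟩
      push_neg at hyα
      rcases ih with h | ⟨γ, hγΦ, hγα, hγy⟩
      · exact absurd hyα h
      by_cases hγc : ⟪γ, c⟫ ≠ 0
      · exact ⟨γ, hγΦ, hγα, hγc⟩
      push_neg at hγc
      refine ⟨γ - ⟪γ, y⟫ • y, hrefl y hyΦ γ hγΦ, ?_, ?_⟩
      · simp only [inner_sub_left, real_inner_smul_left]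
        rw [hyα]; simpa using hγα
      · simp only [inner_sub_left, real_inner_smul_left]
        rw [hγc]
        simpa using mul_ne_zero hγy hyc0
  -- obtain a root non-orthogonal to both α and β
  have hβα : ⟪β, α⟫ = 0 := by rw [real_inner_comm]; exact horth
  have hex : ∃ γ ∈ Φ, ⟪γ, α⟫ ≠ 0 ∧ ⟪γ, β⟫ ≠ 0 := by
    rcases key β hconn with h | h
    · exact absurd hβα h
    · exact h
  obtain ⟨γ, hγΦ, hγα, hγβ⟩ := hex
  -- γ is not ±α nor ±β
  have hαβ' : α ≠ β := by
    intro h; rw [h, hlen β hβ] at horth; norm_num at horth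
  have hγa1 : γ ≠ α := by rintro rfl; exact hγβ horth
  have hγa2 : γ ≠ -α := by
    rintro rfl; apply hγβ; rw [inner_neg_left, horth, neg_zero]
  have hγb1 : γ ≠ β := by rintro rfl; exact hγα hβα
  have hγb2 : γ ≠ -β := by
    rintro rfl; apply hγα; rw [inner_neg_left, hβα, neg_zero]
  have h1 := pm_one_aux V Φ hlen hint hγΦ hα hγa1 hγa2 hγα
  have h2 := pm_one_aux V Φ hlen hint hγΦ hβ hγb1 hγb2 hγβ
  -- normalize signs: find γ' with ⟪γ',α⟫ = 1 and ⟪γ',β⟫ = 1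
  have hnorm : ∃ γ' ∈ Φ, ⟪γ', α⟫ = 1 ∧ ⟪γ', β⟫ = 1 := by
    rcases h1 with ha | ha <;> rcases h2 with hb | hb
    · exact ⟨γ, hγΦ, ha, hb⟩
    · -- flip sign on β side: s_β γ = γ - ⟪γ,β⟫ • β
      refine ⟨γ - ⟪γ, β⟫ • β, hrefl β hβ γ hγΦ, ?_, ?_⟩
      · simp only [inner_sub_left, real_inner_smul_left, hβα]
        rw [ha]; ring
      · simp only [inner_sub_left, real_inner_smul_left, hlen β hβ]
        rw [hb]; ring
    · refine ⟨γ - ⟪γ, α⟫ • α, hrefl α hα γ hγΦ, ?_, ?_⟩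
      · simp only [inner_sub_left, real_inner_smul_left, hlen α hα]
        rw [ha]; ring
      · simp only [inner_sub_left, real_inner_smul_left]
        rw [horth, hb]; ring
    · refine ⟨-γ, hneg γ hγΦ, ?_, ?_⟩
      · rw [inner_neg_left, ha]; ring
      · rw [inner_neg_left, hb]; ring
  obtain ⟨γ', hγ'Φ, hγ'α, hγ'β⟩ := hnorm
  -- δ := α + β - γ' is a root
  have hstep1 : γ' - β ∈ Φ := by
    have := hrefl β hβ γ' hγ'Φ
    rwa [hγ'β, one_smul] at this
  have hδΦ : α + β - γ' ∈ Φ := by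
    have h := hrefl (γ' - β) hstep1 α hα
    have hip : ⟪α, γ' - β⟫ = 1 := by
      simp only [inner_sub_right]
      linarith [real_inner_comm α γ', hγ'α, horth]
    rw [hip, one_smul] at h
    have : α - (γ' - β) = α + β - γ' := by abel
    rwa [this] at h
  refine ⟨α, hα, β, hβ, γ', hγ'Φ, α + β - γ', hδΦ, hsum.symm, by rw [hsum]; abel, ?_⟩
  -- the two pairs are distinct since γ' ∉ {α, β}
  intro hset
  have hγ'mem : γ' ∈ ({α, β} : Set V) := by
    rw [hset]; left; rfl
  rcases hγ'mem with h | h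
  · rw [h, hlen α hα] at hγ'α; norm_num at hγ'α
  · simp only [Set.mem_singleton_iff] at h
    rw [h] at hγ'α
    rw [hβα] at hγ'α; norm_num at hγ'α
end

section
/- Let Φ be an irreducible simply laced root system with highest root ω (relative to a fixed base), and let λ be a dominant weight lying in Λ_0 ∪ Λ_1 ∪ Λ_2 (i.e., λ is a sum of two roots with non-negative inner product). Then λ = ω + ψ for some positive root ψ. -/
open scoped RealInnerProductSpace

/-- In an irreducible simply laced root system with positive system `Φ⁺` and
highest root `ω`, every dominant weight `λ` which is a sum of two roots with
non-negative inner product can be written as `λ = ω + ψ` for some positive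
root `ψ`. -/
theorem dominant_sum_eq_highest_add_positive (V : Type*) [NormedAddCommGroup V]
    [InnerProductSpace ℝ V] [FiniteDimensional ℝ V]
    (Φ : Finset V)
    (h0 : (0 : V) ∉ Φ)
    (hlen : ∀ α ∈ Φ, ⟪α, α⟫ = 2)
    (hneg : ∀ α ∈ Φ, -α ∈ Φ)
    (hred : ∀ α ∈ Φ, ∀ t : ℝ, t • α ∈ Φ → t = 1 ∨ t = -1)
    (hint : ∀ α ∈ Φ, ∀ β ∈ Φ, ∃ n : ℤ, ⟪α, β⟫ = n)
    (hrefl : ∀ α ∈ Φ, ∀ β ∈ Φ, β - ⟪β, α⟫ • α ∈ Φ)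
    (hirr : ∀ S ⊆ Φ, (∀ a ∈ S, ∀ b ∈ Φ, b ∉ S → ⟪a, b⟫ = 0) → S = ∅ ∨ S = Φ)
    -- `Φp` is a positive system for `Φ`
    (Φp : Finset V) (hsub : Φp ⊆ Φ)
    (hsplit : ∀ α ∈ Φ, (α ∈ Φp ↔ -α ∉ Φp))
    (hclosed : ∀ α ∈ Φp, ∀ β ∈ Φp, α + β ∈ Φ → α + β ∈ Φp)
    -- `ω` is the highest root: the (unique) dominant root
    (ω : V) (hω : ω ∈ Φ) (hωdom : ∀ α ∈ Φp, 0 ≤ ⟪ω, α⟫)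
    (lam : V)
    (hdom : ∀ α ∈ Φp, 0 ≤ ⟪lam, α⟫)
    (hlam : ∃ α ∈ Φ, ∃ β ∈ Φ, 0 ≤ ⟪α, β⟫ ∧ lam = α + β) :
    ∃ ψ ∈ Φp, lam = ω + ψ := by
  classical
  obtain ⟨α, hα, β, hβ, hab, hsum⟩ := hlam
  -- Cauchy-Schwarz type facts
  have hb2 : ∀ a ∈ Φ, ∀ b ∈ Φ, ⟪a, b⟫ ≤ 2 := by
    intro a ha b hb
    have h := real_inner_self_nonneg (x := a - b)
    rw [real_inner_sub_sub_self, hlen a ha, hlen b hb] at h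
    linarith
  have heq2 : ∀ a ∈ Φ, ∀ b ∈ Φ, ⟪a, b⟫ = 2 → a = b := by
    intro a ha b hb h
    have h2 : ⟪a - b, a - b⟫ = 0 := by
      rw [real_inner_sub_sub_self, hlen a ha, hlen b hb, h]; ring
    exact sub_eq_zero.mp (inner_self_eq_zero.mp h2)
  -- positivity criterion
  have hpos : ∀ μ : V, (∀ γ ∈ Φp, 0 ≤ ⟪μ, γ⟫) → ∀ γ ∈ Φ, 0 < ⟪μ, γ⟫ → γ ∈ Φp := by
    intro μ hμ γ hγ h
    by_contra hn
    have h2 : -γ ∈ Φp := by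
      by_contra h3
      exact hn ((hsplit γ hγ).mpr h3)
    have h4 := hμ _ h2
    rw [inner_neg_right] at h4
    linarith
  -- difference of roots with inner product 1
  have hdiff : ∀ a ∈ Φ, ∀ b ∈ Φ, ⟪a, b⟫ = 1 → b - a ∈ Φ := by
    intro a ha b hb h
    have h1 := hrefl a ha b hb
    rwa [real_inner_comm a b, h, one_smul] at h1
  -- key dominance inequality coming from reflecting in ω
  have hrefldom : ∀ δ ∈ Φ, 0 < ⟪ω, δ⟫ → ⟪lam, δ⟫ ≤ ⟪ω, δ⟫ * ⟪lam, ω⟫ := by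
    intro δ hδ ht
    have h1 := hrefl ω hω δ hδ
    rw [real_inner_comm ω δ] at h1
    have h2 : ⟪ω, δ⟫ • ω - δ ∈ Φ := by
      have := hneg _ h1
      rwa [neg_sub] at this
    have h3 : (⟪ω, δ⟫ • ω - δ) ∈ Φp := by
      apply hpos ω hωdom _ h2
      rw [inner_sub_right, real_inner_smul_right, hlen ω hω]
      linarith
    have h4 := hdom _ h3
    rw [inner_sub_right, real_inner_smul_right] at h4
    linarith
  have hAA := hlen α hα
  have hBB := hlen β hβ
  have hlamα : ⟪lam, α⟫ = 2 + ⟪α, β⟫ := by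
    rw [hsum, inner_add_left, hAA, real_inner_comm α β]
  have hlamβ : ⟪lam, β⟫ = 2 + ⟪α, β⟫ := by
    rw [hsum, inner_add_left, hBB]; ring
  have hlamω : ⟪lam, ω⟫ = ⟪ω, α⟫ + ⟪ω, β⟫ := by
    rw [hsum, inner_add_left, real_inner_comm ω α, real_inner_comm ω β]
  have hαp : α ∈ Φp := hpos lam hdom α hα (by rw [hlamα]; linarith)
  have hβp : β ∈ Φp := hpos lam hdom β hβ (by rw [hlamβ]; linarith)
  by_cases hα2 : ⟪ω, α⟫ = 2
  · have h := heq2 ω hω α hα hα2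
    exact ⟨β, hβp, by rw [hsum, ← h]⟩
  by_cases hβ2 : ⟪ω, β⟫ = 2
  · have h := heq2 ω hω β hβ hβ2
    exact ⟨α, hαp, by rw [hsum, ← h, add_comm]⟩
  obtain ⟨na, hna⟩ := hint ω hω α hα
  obtain ⟨nb, hnb⟩ := hint ω hω β hβ
  obtain ⟨nc, hnc⟩ := hint α hα β hβ
  have hna0 : 0 ≤ na := by
    have := hωdom α hαp; rw [hna] at this; exact_mod_cast this
  have hnb0 : 0 ≤ nb := by
    have := hωdom β hβp; rw [hnb] at this; exact_mod_cast this
  have hnc0 : 0 ≤ nc := by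
    have := hab; rw [hnc] at this; exact_mod_cast this
  have hna2 : na ≤ 2 := by
    have := hb2 ω hω α hα; rw [hna] at this; exact_mod_cast this
  have hnb2 : nb ≤ 2 := by
    have := hb2 ω hω β hβ; rw [hnb] at this; exact_mod_cast this
  have hna2' : na ≠ 2 := by
    intro h; exact hα2 (by rw [hna, h]; norm_num)
  have hnb2' : nb ≠ 2 := by
    intro h; exact hβ2 (by rw [hnb, h]; norm_num)
  have hna01 : na = 0 ∨ na = 1 := by omega
  have hnb01 : nb = 0 ∨ nb = 1 := by omega
  rcases hna01 with ha0 | ha1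
  · -- ⟪ω, α⟫ = 0
    have hα0 : ⟪ω, α⟫ = 0 := by rw [hna, ha0]; norm_num
    rcases hnb01 with hb0 | hb1
    · -- ⟪ω, β⟫ = 0 as well : contradiction with irreducibility
      exfalso
      have hβ0 : ⟪ω, β⟫ = 0 := by rw [hnb, hb0]; norm_num
      have hlamω0 : ⟪lam, ω⟫ = 0 := by rw [hlamω, hα0, hβ0]; ring
      have hA1 : ∀ δ ∈ Φ, 0 < ⟪lam, δ⟫ → ⟪ω, δ⟫ = 0 := by
        intro δ hδ hl
        have hδp : δ ∈ Φp := hpos lam hdom δ hδ hl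
        by_contra hne
        have ht : 0 < ⟪ω, δ⟫ := lt_of_le_of_ne (hωdom δ hδp) (Ne.symm hne)
        have h := hrefldom δ hδ ht
        rw [hlamω0, mul_zero] at h
        linarith
      have hA0 : ∀ δ ∈ Φ, ⟪lam, δ⟫ ≠ 0 → ⟪ω, δ⟫ = 0 := by
        intro δ hδ hne
        rcases hne.lt_or_gt with h | h
        · have h2 : 0 < ⟪lam, -δ⟫ := by rw [inner_neg_right]; linarith
          have h3 := hA1 (-δ) (hneg δ hδ) h2
          rw [inner_neg_right] at h3; linarith
        · exact hA1 δ hδ h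
      set S := Φ.filter (fun y => ∃ a ∈ Φ, ⟪lam, a⟫ ≠ 0 ∧ ⟪a, y⟫ ≠ 0) with hSdef
      have hαS : α ∈ S := by
        refine Finset.mem_filter.mpr ⟨hα, α, hα, ?_, ?_⟩
        · rw [hlamα]; intro h; linarith
        · rw [hAA]; norm_num
      have hωS : ω ∉ S := by
        intro h
        obtain ⟨-, a, ha, hla, haω⟩ := Finset.mem_filter.mp h
        exact haω (by rw [real_inner_comm]; exact hA0 a ha hla)
      have hdec : ∀ x ∈ S, ∀ y ∈ Φ, y ∉ S → ⟪x, y⟫ = 0 := by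
        intro x hxS y hy hyS
        obtain ⟨hx, a, ha, hla, hax⟩ := Finset.mem_filter.mp hxS
        by_contra hxy
        have hyn : ∀ b ∈ Φ, ⟪lam, b⟫ ≠ 0 → ⟪b, y⟫ = 0 := by
          intro b hb hlb
          by_contra hby
          exact hyS (Finset.mem_filter.mpr ⟨hy, b, hb, hlb, hby⟩)
        have hay : ⟪a, y⟫ = 0 := hyn a ha hla
        have ha' : a - ⟪a, x⟫ • x ∈ Φ := hrefl x hx a ha
        have ha'y : ⟪a - ⟪a, x⟫ • x, y⟫ = -(⟪a, x⟫ * ⟪x, y⟫) := by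
          rw [inner_sub_left, real_inner_smul_left, hay]; ring
        by_cases hla' : ⟪lam, a - ⟪a, x⟫ • x⟫ = 0
        · have hlx : ⟪lam, x⟫ ≠ 0 := by
            rw [inner_sub_right, real_inner_smul_right] at hla'
            intro h0
            rw [h0, mul_zero, sub_zero] at hla'
            exact hla hla'
          exact hyS (Finset.mem_filter.mpr ⟨hy, x, hx, hlx, hxy⟩)
        · have h := hyn _ ha' hla'
          rw [ha'y] at h
          rcases mul_eq_zero.mp (neg_eq_zero.mp h) with h' | h'
          · exact hax h'
          · exact hxy h'
      rcases hirr S (Finset.filter_subset _ _) hdec with hS | hS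
      · rw [hS] at hαS; exact absurd hαS (Finset.notMem_empty α)
      · rw [hS] at hωS; exact hωS hω
    · -- ⟪ω, β⟫ = 1 : contradiction with dominance
      exfalso
      have htβ : (0:ℝ) < ⟪ω, β⟫ := by rw [hnb, hb1]; norm_num
      have h := hrefldom β hβ htβ
      rw [hlamβ, hlamω, hα0, hnb, hb1] at h
      push_cast at h
      linarith
  · -- ⟪ω, α⟫ = 1
    have hα1 : ⟪ω, α⟫ = 1 := by rw [hna, ha1]; norm_num
    have htα : (0:ℝ) < ⟪ω, α⟫ := by rw [hα1]; norm_num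
    have h := hrefldom α hα htα
    rw [hlamα, hlamω, hα1, hnb, hnc] at h
    have h' : (2:ℝ) + nc ≤ 1 + nb := by push_cast at h; linarith
    have hZ : (2 + nc : ℤ) ≤ 1 + nb := by exact_mod_cast h'
    have hb1 : nb = 1 := by omega
    have hc0 : nc = 0 := by omega
    have htβ1 : ⟪ω, β⟫ = 1 := by rw [hnb, hb1]; norm_num
    have htc0 : ⟪α, β⟫ = 0 := by rw [hnc, hc0]; norm_num
    have h5 : β - ω ∈ Φ := hdiff ω hω β hβ htβ1
    have h6 : ω - β ∈ Φ := by have := hneg _ h5; rwa [neg_sub] at this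
    have h7 : ⟪ω - β, α⟫ = 1 := by
      rw [inner_sub_left, hα1, real_inner_comm α β, htc0]; norm_num
    have h8 : α - (ω - β) ∈ Φ := hdiff (ω - β) h6 α hα h7
    have h9 : α - (ω - β) ∈ Φp := by
      apply hpos lam hdom _ h8
      rw [inner_sub_right, inner_sub_right, hlamα, hlamβ, hlamω, htc0, hα1, htβ1]
      norm_num
    exact ⟨α - (ω - β), h9, by rw [hsum]; abel⟩
end

section
/- Let Φ be a simply laced root system and α, β orthogonal roots. The number of positive roots γ with κ(α,γ) = -κ(β,γ) = ±1 equals 2(n_{α+β} - 1), where n_{α+β} is the number of unordered pairs of roots summing to α+β. -/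
open scoped RealInnerProductSpace

/-- In an irreducible simply laced root system with positive system `Φ⁺`, for
orthogonal roots `α, β`, the number of positive roots `γ` with
`κ(α,γ) = -κ(β,γ) = ±1` equals `2(n_{α+β} - 1)`, where `n_{α+β}` is the
number of unordered pairs of roots summing to `α+β`. -/
theorem count_positive_roots_orthogonal_pair (V : Type*) [NormedAddCommGroup V]
    [InnerProductSpace ℝ V] [FiniteDimensional ℝ V]
    (Φ : Finset V)
    (h0 : (0 : V) ∉ Φ)
    (hlen : ∀ α ∈ Φ, ⟪α, α⟫ = 2)
    (hneg : ∀ α ∈ Φ, -α ∈ Φ)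
    (hred : ∀ α ∈ Φ, ∀ t : ℝ, t • α ∈ Φ → t = 1 ∨ t = -1)
    (hint : ∀ α ∈ Φ, ∀ β ∈ Φ, ∃ n : ℤ, ⟪α, β⟫ = n)
    (hrefl : ∀ α ∈ Φ, ∀ β ∈ Φ, β - ⟪β, α⟫ • α ∈ Φ)
    (hirr : ∀ S ⊆ Φ, (∀ a ∈ S, ∀ b ∈ Φ, b ∉ S → ⟪a, b⟫ = 0) → S = ∅ ∨ S = Φ)
    (Φp : Finset V) (hsub : Φp ⊆ Φ)
    (hsplit : ∀ α ∈ Φ, (α ∈ Φp ↔ -α ∉ Φp))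
    (hclosed : ∀ α ∈ Φp, ∀ β ∈ Φp, α + β ∈ Φ → α + β ∈ Φp)
    (α β : V) (hα : α ∈ Φ) (hβ : β ∈ Φ) (horth : ⟪α, β⟫ = 0) :
    {γ : V | γ ∈ Φp ∧ ⟪α, γ⟫ = -⟪β, γ⟫ ∧ (⟪α, γ⟫ = 1 ∨ ⟪α, γ⟫ = -1)}.ncard
      = 2 * ({S : Set V | ∃ γ ∈ Φ, ∃ δ ∈ Φ, γ + δ = α + β ∧ S = {γ, δ}}.ncard - 1) := by
  classical
  have hαα : ⟪α, α⟫ = (2:ℝ) := hlen α hα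
  have hββ : ⟪β, β⟫ = (2:ℝ) := hlen β hβ
  have hβα : ⟪β, α⟫ = (0:ℝ) := by rw [real_inner_comm]; exact horth
  -- sum/difference of roots lemmas
  have hsub1 : ∀ γ ∈ Φ, ∀ δ ∈ Φ, ⟪γ, δ⟫ = 1 → γ - δ ∈ Φ := by
    intro γ hγ δ hδ h
    have := hrefl δ hδ γ hγ
    rwa [h, one_smul] at this
  have hadd1 : ∀ γ ∈ Φ, ∀ δ ∈ Φ, ⟪γ, δ⟫ = -1 → γ + δ ∈ Φ := by
    intro γ hγ δ hδ h
    have := hrefl δ hδ γ hγ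
    rw [h] at this
    simpa [sub_neg_eq_add] using this
  -- bound on inner products
  have hbound : ∀ γ ∈ Φ, ∀ δ ∈ Φ, ∃ n : ℤ, ⟪γ, δ⟫ = n ∧ -2 ≤ n ∧ n ≤ 2 := by
    intro γ hγ δ hδ
    obtain ⟨n, hn⟩ := hint γ hγ δ hδ
    have hcs := real_inner_mul_inner_self_le γ δ
    rw [hn, hlen γ hγ, hlen δ hδ] at hcs
    have h1 : (-2:ℝ) ≤ (n:ℝ) ∧ (n:ℝ) ≤ 2 := by
      constructor <;> nlinarith [sq_nonneg ((n:ℝ) - 2), sq_nonneg ((n:ℝ) + 2)]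
    exact ⟨n, hn, by exact_mod_cast h1.1, by exact_mod_cast h1.2⟩
  -- inner product 2 forces equality
  have heq2 : ∀ γ ∈ Φ, ∀ δ ∈ Φ, ⟪γ, δ⟫ = 2 → γ = δ := by
    intro γ hγ δ hδ h
    have h2 : ⟪γ - δ, γ - δ⟫ = (0:ℝ) := by
      rw [inner_sub_left, inner_sub_right, inner_sub_right, hlen γ hγ, hlen δ hδ,
        real_inner_comm γ δ, h]; norm_num
    have := inner_self_eq_zero.mp h2
    exact sub_eq_zero.mp this
  -- membership: γ ∈ A implies α+β-γ ∈ Φ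
  have hAmem : ∀ γ ∈ Φ, ⟪α, γ⟫ = 1 → ⟪β, γ⟫ = 1 → α + β - γ ∈ Φ := by
    intro γ hγ h1 h2
    have hγα : γ - α ∈ Φ := hsub1 γ hγ α hα (by rw [real_inner_comm]; exact h1)
    have h3 : ⟪β, γ - α⟫ = (1:ℝ) := by rw [inner_sub_right, h2, hβα]; ring
    have := hsub1 β hβ (γ - α) hγα h3
    have he : β - (γ - α) = α + β - γ := by abel
    rwa [he] at this
  -- pair analysis
  have hpairs : ∀ γ ∈ Φ, α + β - γ ∈ Φ →
      γ = α ∨ γ = β ∨ (⟪α, γ⟫ = 1 ∧ ⟪β, γ⟫ = 1) := by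
    intro γ hγ hδ
    set δ := α + β - γ with hδdef
    have hsum4 : ⟪γ + δ, γ + δ⟫ = (4:ℝ) := by
      have : γ + δ = α + β := by rw [hδdef]; abel
      rw [this]
      rw [inner_add_left, inner_add_right, inner_add_right, hαα, hββ, horth, hβα]
      norm_num
    have hc : ⟪γ, δ⟫ = (0:ℝ) := by
      have hgg := hlen γ hγ
      have hdd := hlen δ hδ
      have hcomm := real_inner_comm δ γ
      simp only [inner_add_left, inner_add_right] at hsum4
      linarith
    have hab : ⟪γ, α⟫ + ⟪γ, β⟫ = (2:ℝ) := by
      have : ⟪γ, α + β⟫ = ⟪γ, γ + δ⟫ := by rw [show γ + δ = α + β from by rw [hδdef]; abel]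
      rw [inner_add_right, inner_add_right, hlen γ hγ, hc] at this
      linarith
    obtain ⟨na, hna, hna1, hna2⟩ := hbound γ hγ α hα
    obtain ⟨nb, hnb, hnb1, hnb2⟩ := hbound γ hγ β hβ
    have hnab : na + nb = 2 := by
      have : ((na + nb : ℤ) : ℝ) = ((2:ℤ):ℝ) := by push_cast; rw [← hna, ← hnb]; linarith
      exact_mod_cast this
    have hcomm1 := real_inner_comm γ α
    have hcomm2 := real_inner_comm γ β
    rcases (by omega : na = 2 ∨ na = 0 ∨ (na = 1 ∧ nb = 1)) with h | h | ⟨h, h'⟩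
    · left
      exact (heq2 γ hγ α hα (by rw [hna, h]; norm_num)).symm ▸
        (heq2 γ hγ α hα (by rw [hna, h]; norm_num))
    · right; left
      have : nb = 2 := by omega
      exact heq2 γ hγ β hβ (by rw [hnb, this]; norm_num)
    · right; right
      constructor
      · rw [hcomm1, hna, h]; norm_num
      · rw [hcomm2, hnb, h']; norm_num
  -- the finsets
  set f : V → Set V := fun γ => ({γ, α + β - γ} : Set V) with hf
  set Af : Finset V := Φ.filter (fun γ => ⟪α, γ⟫ = 1 ∧ ⟪β, γ⟫ = 1) with hAf
  set Bf : Finset V := Φp.filter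
      (fun γ => ⟪α, γ⟫ = -⟪β, γ⟫ ∧ (⟪α, γ⟫ = 1 ∨ ⟪α, γ⟫ = -1)) with hBf
  set D : Finset V := Φ.filter (fun γ => α + β - γ ∈ Φ) with hD
  -- LHS set
  have hLHS : {γ : V | γ ∈ Φp ∧ ⟪α, γ⟫ = -⟪β, γ⟫ ∧ (⟪α, γ⟫ = 1 ∨ ⟪α, γ⟫ = -1)}
      = (Bf : Set V) := by
    ext γ; simp [hBf, and_assoc]
  -- RHS set
  have hRHS : {S : Set V | ∃ γ ∈ Φ, ∃ δ ∈ Φ, γ + δ = α + β ∧ S = {γ, δ}}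
      = ((D.image f : Finset (Set V)) : Set (Set V)) := by
    ext S
    simp only [Set.mem_setOf_eq, Finset.coe_image, Set.mem_image, Finset.mem_coe,
      Finset.mem_filter, hD, hf]
    constructor
    · rintro ⟨γ, hγ, δ, hδ, hsum, rfl⟩
      have hδ' : δ = α + β - γ := by rw [← hsum]; abel
      exact ⟨γ, ⟨hγ, hδ' ▸ hδ⟩, by rw [← hδ']⟩
    · rintro ⟨γ, ⟨hγ, hγ'⟩, rfl⟩
      exact ⟨γ, hγ, α + β - γ, hγ', by abel, rfl⟩
  -- D = insert α (insert β Af)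
  have hDeq : D = insert α (insert β Af) := by
    ext γ
    simp only [hD, hAf, Finset.mem_filter, Finset.mem_insert]
    constructor
    · rintro ⟨hγ, hγ'⟩
      rcases hpairs γ hγ hγ' with h | h | h
      · exact Or.inl h
      · exact Or.inr (Or.inl h)
      · exact Or.inr (Or.inr ⟨hγ, h⟩)
    · rintro (rfl | rfl | ⟨hγ, h1, h2⟩)
      · exact ⟨hα, by rwa [add_sub_cancel_left]⟩
      · exact ⟨hβ, by rwa [add_sub_cancel_right]⟩
      · exact ⟨hγ, hAmem γ hγ h1 h2⟩
  have hfα : f α = ({α, β} : Set V) := by simp [hf, add_sub_cancel_left]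
  have hfβ : f β = ({α, β} : Set V) := by
    simp only [hf, add_sub_cancel_right]
    exact Set.pair_comm β α
  have himeq : D.image f = insert ({α, β} : Set V) (Af.image f) := by
    rw [hDeq, Finset.image_insert, Finset.image_insert, hfα, hfβ, Finset.insert_idem]
  have hABnotmem : ({α, β} : Set V) ∉ Af.image f := by
    intro h
    obtain ⟨γ, hγ, hfγ⟩ := Finset.mem_image.mp h
    have hγmem : γ ∈ ({α, β} : Set V) := by rw [← hfγ]; left; rfl
    obtain ⟨hγΦ, h1, h2⟩ : γ ∈ Φ ∧ ⟪α, γ⟫ = 1 ∧ ⟪β, γ⟫ = 1 := by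
      simpa [hAf, and_assoc] using hγ
    have hor : γ = α ∨ γ = β := by simpa using hγmem
    rcases hor with h' | h'
    · rw [h', hαα] at h1; norm_num at h1
    · rw [h', horth] at h1; norm_num at h1
  have hcardD : (D.image f).card = (Af.image f).card + 1 := by
    rw [himeq, Finset.card_insert_of_notMem hABnotmem]
  -- σ stable on Af
  have hσAf : ∀ γ ∈ Af, α + β - γ ∈ Af := by
    intro γ hγ
    obtain ⟨hγΦ, h1, h2⟩ : γ ∈ Φ ∧ ⟪α, γ⟫ = 1 ∧ ⟪β, γ⟫ = 1 := by
      simpa [hAf, and_assoc] using hγ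
    have hσΦ := hAmem γ hγΦ h1 h2
    refine Finset.mem_filter.mpr ⟨hσΦ, ?_, ?_⟩
    · rw [inner_sub_right, inner_add_right, hαα, horth, h1]; ring
    · rw [inner_sub_right, inner_add_right, hβα, hββ, h2]; ring
  -- fibers of f on Af have size 2
  have hfiber : ∀ b ∈ Af.image f, (Af.filter fun a => f a = b).card = 2 := by
    intro b hb
    obtain ⟨γ, hγ, rfl⟩ := Finset.mem_image.mp hb
    obtain ⟨hγΦ, h1, h2⟩ : γ ∈ Φ ∧ ⟪α, γ⟫ = 1 ∧ ⟪β, γ⟫ = 1 := by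
      simpa [hAf, and_assoc] using hγ
    have hne : γ ≠ α + β - γ := by
      intro h
      have h4 : ⟪γ, α + β - γ⟫ = (2:ℝ) := by rw [← h]; exact hlen γ hγΦ
      have c1 := real_inner_comm γ α
      have c2 := real_inner_comm γ β
      rw [inner_sub_right, inner_add_right, hlen γ hγΦ] at h4
      linarith
    have hfil : (Af.filter fun a => f a = f γ) = {γ, α + β - γ} := by
      ext δ
      simp only [Finset.mem_filter, Finset.mem_insert, Finset.mem_singleton]
      constructor
      · rintro ⟨hδ, hfδ⟩
        have : δ ∈ f δ := by left; rfl
        rw [hfδ] at this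
        exact this
      · rintro (rfl | rfl)
        · exact ⟨hγ, rfl⟩
        · refine ⟨hσAf γ hγ, ?_⟩
          simp only [hf, sub_sub_cancel]
          exact Set.pair_comm (α + β - γ) γ
    rw [hfil, Finset.card_insert_of_notMem (by simpa using hne), Finset.card_singleton]
  have hcardAf : Af.card = 2 * (Af.image f).card := by
    rw [Finset.card_eq_sum_card_image f Af]
    rw [Finset.sum_congr rfl hfiber, Finset.sum_const, smul_eq_mul, mul_comm]
  -- Bf ≃ Af
  have hcardBf : Bf.card = Af.card := by
    refine Finset.card_nbij' (fun γ => if ⟪α, γ⟫ = (1:ℝ) then γ + β else β - γ)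
      (fun δ => if δ - β ∈ Φp then δ - β else β - δ) ?_ ?_ ?_ ?_
    · intro γ hγ
      dsimp only
      obtain ⟨hγp, hc1, hc2⟩ : γ ∈ Φp ∧ ⟪α, γ⟫ = -⟪β, γ⟫ ∧ (⟪α, γ⟫ = 1 ∨ ⟪α, γ⟫ = -1) := by
        simpa [hBf, and_assoc] using hγ
      have hγΦ : γ ∈ Φ := hsub hγp
      rcases hc2 with h | h
      · have hbγ : ⟪β, γ⟫ = (-1:ℝ) := by rw [h] at hc1; linarith
        have hmem : γ + β ∈ Φ := hadd1 γ hγΦ β hβ (by rw [real_inner_comm]; exact hbγ)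
        rw [if_pos h]
        refine Finset.mem_filter.mpr ⟨hmem, ?_, ?_⟩
        · rw [inner_add_right, h, horth]; ring
        · rw [inner_add_right, hbγ, hββ]; ring
      · have hbγ : ⟪β, γ⟫ = (1:ℝ) := by rw [h] at hc1; linarith
        have hmem : β - γ ∈ Φ := hsub1 β hβ γ hγΦ hbγ
        rw [if_neg (by rw [h]; norm_num)]
        refine Finset.mem_filter.mpr ⟨hmem, ?_, ?_⟩
        · rw [inner_sub_right, h, horth]; ring
        · rw [inner_sub_right, hbγ, hββ]; ring
    · intro δ hδ
      dsimp only
      obtain ⟨hδΦ, h1, h2⟩ : δ ∈ Φ ∧ ⟪α, δ⟫ = 1 ∧ ⟪β, δ⟫ = 1 := by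
        simpa [hAf, and_assoc] using hδ
      have hδβ : δ - β ∈ Φ := hsub1 δ hδΦ β hβ (by rw [real_inner_comm]; exact h2)
      by_cases hp : δ - β ∈ Φp
      · rw [if_pos hp]
        refine Finset.mem_filter.mpr ⟨hp, ?_, ?_⟩
        · rw [inner_sub_right, inner_sub_right, h1, h2, horth, hββ]; ring
        · left; rw [inner_sub_right, h1, horth]; ring
      · rw [if_neg hp]
        have hβδΦ : β - δ ∈ Φ := by
          have := hneg (δ - β) hδβ
          rwa [neg_sub] at this
        have hβδp : β - δ ∈ Φp := by
          rw [hsplit (β - δ) hβδΦ, neg_sub]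
          exact hp
        refine Finset.mem_filter.mpr ⟨hβδp, ?_, ?_⟩
        · rw [inner_sub_right, inner_sub_right, h1, h2, horth, hββ]; ring
        · right; rw [inner_sub_right, h1, horth]; ring
    · intro γ hγ
      dsimp only
      obtain ⟨hγp, hc1, hc2⟩ : γ ∈ Φp ∧ ⟪α, γ⟫ = -⟪β, γ⟫ ∧ (⟪α, γ⟫ = 1 ∨ ⟪α, γ⟫ = -1) := by
        simpa [hBf, and_assoc] using hγ
      have hγΦ : γ ∈ Φ := hsub hγp
      rcases hc2 with h | h
      · rw [if_pos h, add_sub_cancel_right, if_pos hγp]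
      · have hne1 : ¬(⟪α, γ⟫ = (1:ℝ)) := by rw [h]; norm_num
        rw [if_neg hne1]
        have e1 : β - γ - β = -γ := by abel
        rw [e1, if_neg ((hsplit γ hγΦ).mp hγp)]
        abel
    · intro δ hδ
      dsimp only
      obtain ⟨hδΦ, h1, h2⟩ : δ ∈ Φ ∧ ⟪α, δ⟫ = 1 ∧ ⟪β, δ⟫ = 1 := by
        simpa [hAf, and_assoc] using hδ
      by_cases hp : δ - β ∈ Φp
      · rw [if_pos hp, if_pos (by rw [inner_sub_right, h1, horth]; ring), sub_add_cancel]
      · rw [if_neg hp, if_neg (by rw [inner_sub_right, h1, horth]; norm_num)]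
        abel
  -- conclude
  rw [hLHS, hRHS, Set.ncard_coe_finset, Set.ncard_coe_finset, hcardD, hcardBf, hcardAf]
  omega
end

section
/- Let Φ be an irreducible simply laced root system. For each root α, the centralizer in the Weyl group W of the reflection s_α equals the subgroup generated by the reflections s_β for β = ±α or β ∈ Φ orthogonal to α. -/
open scoped RealInnerProductSpace
open scoped Classical

section Machinery

variable {V : Type*} [NormedAddCommGroup V] [InnerProductSpace ℝ V]

lemma LE.mulApply (e₁ e₂ : V ≃ₗ[ℝ] V) (v : V) : (e₁ * e₂) v = e₁ (e₂ v) := rfl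
lemma LE.oneApply (v : V) : (1 : V ≃ₗ[ℝ] V) v = v := rfl
lemma LE.invApply (e : V ≃ₗ[ℝ] V) (v : V) : e (e⁻¹ v) = v := e.apply_symm_apply v
lemma LE.invApply' (e : V ≃ₗ[ℝ] V) (v : V) : e⁻¹ (e v) = v := e.symm_apply_apply v

structure Ctx (V : Type*) [NormedAddCommGroup V] [InnerProductSpace ℝ V] where
  Φ : Finset V
  z : V
  s : V → (V ≃ₗ[ℝ] V)
  h0 : (0 : V) ∉ Φ
  hlen : ∀ β ∈ Φ, ⟪β, β⟫ = 2
  hneg : ∀ β ∈ Φ, -β ∈ Φ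
  hint : ∀ β ∈ Φ, ∀ γ ∈ Φ, ∃ n : ℤ, ⟪β, γ⟫ = n
  hrefl : ∀ β ∈ Φ, ∀ γ ∈ Φ, γ - ⟪γ, β⟫ • β ∈ Φ
  hs : ∀ β ∈ Φ, ∀ v : V, s β v = v - ⟪v, β⟫ • β
  hz : ∀ β ∈ Φ, ⟪z, β⟫ ≠ 0

namespace Ctx

variable (c : Ctx V)

def W : Subgroup (V ≃ₗ[ℝ] V) := Subgroup.closure {g | ∃ β ∈ c.Φ, g = c.s β}

def Pos (β : V) : Prop := 0 < ⟪c.z, β⟫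

def Simple (δ : V) : Prop :=
  δ ∈ c.Φ ∧ c.Pos δ ∧ ¬∃ γ ∈ c.Φ, ∃ η ∈ c.Φ, c.Pos γ ∧ c.Pos η ∧ δ = γ + η

noncomputable def N (w : V ≃ₗ[ℝ] V) : Finset V :=
  c.Φ.filter (fun γ => 0 < ⟪c.z, γ⟫ ∧ ⟪c.z, w γ⟫ < 0)

variable {c}

lemma s_maps {β γ : V} (hβ : β ∈ c.Φ) (hγ : γ ∈ c.Φ) : c.s β γ ∈ c.Φ := by
  rw [c.hs β hβ]; exact c.hrefl β hβ γ hγ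

lemma s_inner {β : V} (hβ : β ∈ c.Φ) (u v : V) : ⟪c.s β u, c.s β v⟫ = ⟪u, v⟫ := by
  rw [c.hs β hβ, c.hs β hβ]
  simp only [inner_sub_left, inner_sub_right, real_inner_smul_left, real_inner_smul_right,
    c.hlen β hβ]
  rw [real_inner_comm β v]
  ring

lemma s_s {β : V} (hβ : β ∈ c.Φ) (v : V) : c.s β (c.s β v) = v := by
  rw [c.hs β hβ, c.hs β hβ]
  simp only [inner_sub_left, real_inner_smul_left, c.hlen β hβ]
  module

lemma s_invol {β : V} (hβ : β ∈ c.Φ) : c.s β * c.s β = 1 :=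
  LinearEquiv.toLinearMap_injective (LinearMap.ext fun v => s_s hβ v)

lemma s_neg {β : V} (hβ : β ∈ c.Φ) : c.s (-β) = c.s β := by
  refine LinearEquiv.toLinearMap_injective (LinearMap.ext fun v => ?_)
  simp only [LinearEquiv.coe_coe, c.hs β hβ, c.hs (-β) (c.hneg β hβ)]
  rw [inner_neg_right, smul_neg, neg_smul, neg_neg]

lemma s_apply_self {β : V} (hβ : β ∈ c.Φ) : c.s β β = -β := by
  rw [c.hs β hβ, c.hlen β hβ, two_smul]; abel

lemma s_mem_W {β : V} (hβ : β ∈ c.Φ) : c.s β ∈ c.W :=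
  Subgroup.subset_closure ⟨β, hβ, rfl⟩

lemma W_facts {w : V ≃ₗ[ℝ] V} (hw : w ∈ c.W) :
    (∀ u v : V, ⟪w u, w v⟫ = ⟪u, v⟫) ∧ (∀ γ ∈ c.Φ, w γ ∈ c.Φ) := by
  refine Subgroup.closure_induction ?_ ?_ ?_ ?_ hw
  · rintro x ⟨β, hβ, rfl⟩
    exact ⟨s_inner hβ, fun γ hγ => s_maps hβ hγ⟩
  · exact ⟨fun u v => rfl, fun γ hγ => hγ⟩
  · rintro x y hx hy ⟨hx1, hx2⟩ ⟨hy1, hy2⟩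
    exact ⟨fun u v => by rw [LE.mulApply, LE.mulApply, hx1, hy1],
      fun γ hγ => by rw [LE.mulApply]; exact hx2 _ (hy2 γ hγ)⟩
  · rintro x hx ⟨hx1, hx2⟩
    constructor
    · intro u v
      have := hx1 (x⁻¹ u) (x⁻¹ v)
      rw [LE.invApply, LE.invApply] at this
      exact this.symm
    · intro γ hγ
      classical
      have himg : c.Φ.image x = c.Φ := by
        apply Finset.eq_of_subset_of_card_le
        · intro y hy
          obtain ⟨a, ha, rfl⟩ := Finset.mem_image.1 hy
          exact hx2 a ha
        · rw [Finset.card_image_of_injective _ x.injective]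
      rw [← himg] at hγ
      obtain ⟨a, ha, hay⟩ := Finset.mem_image.1 hγ
      have : x⁻¹ γ = a := by rw [← hay, LE.invApply']
      rwa [this]

lemma W_inner {w : V ≃ₗ[ℝ] V} (hw : w ∈ c.W) (u v : V) : ⟪w u, w v⟫ = ⟪u, v⟫ :=
  (W_facts hw).1 u v

lemma W_maps {w : V ≃ₗ[ℝ] V} (hw : w ∈ c.W) {γ : V} (hγ : γ ∈ c.Φ) : w γ ∈ c.Φ :=
  (W_facts hw).2 γ hγ

lemma conj {w : V ≃ₗ[ℝ] V} {β : V} (hw : w ∈ c.W) (hβ : β ∈ c.Φ) :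
    w * c.s β * w⁻¹ = c.s (w β) := by
  refine LinearEquiv.toLinearMap_injective (LinearMap.ext fun v => ?_)
  simp only [LinearEquiv.coe_coe, LE.mulApply]
  rw [c.hs β hβ, c.hs (w β) (W_maps hw hβ), map_sub, map_smul, LE.invApply]
  congr 2
  rw [← W_inner hw (w⁻¹ v) β, LE.invApply]

lemma pos_or {β : V} (hβ : β ∈ c.Φ) : c.Pos β ∨ c.Pos (-β) := by
  rcases lt_or_gt_of_ne (c.hz β hβ) with h | h
  · right; rw [Pos, inner_neg_right]; linarith
  · left; exact h

lemma not_pos {β : V} (hβ : β ∈ c.Φ) (h : ¬ c.Pos β) : ⟪c.z, β⟫ < 0 := by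
  rcases lt_or_gt_of_ne (c.hz β hβ) with h' | h'
  · exact h'
  · exact absurd h' h

lemma pos_of_not_neg {β : V} (hβ : β ∈ c.Φ) (h : ¬ ⟪c.z, β⟫ < 0) : c.Pos β := by
  by_contra h'
  exact h (not_pos hβ h')

lemma not_pos_neg {β : V} (hβ : β ∈ c.Φ) (h : c.Pos β) : ¬ c.Pos (-β) := by
  rw [Pos, inner_neg_right]
  have := h
  rw [Pos] at this
  linarith

lemma inner_eq_two {β γ : V} (hβ : β ∈ c.Φ) (hγ : γ ∈ c.Φ) (h : ⟪β, γ⟫ = 2) : β = γ := by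
  have h0 : ⟪β - γ, β - γ⟫ = 0 := by
    simp only [inner_sub_left, inner_sub_right, c.hlen β hβ, c.hlen γ hγ]
    rw [real_inner_comm β γ, h]; ring
  have := inner_self_eq_zero.1 h0
  rwa [sub_eq_zero] at this

lemma inner_le_two {β γ : V} (hβ : β ∈ c.Φ) (hγ : γ ∈ c.Φ) : ⟪β, γ⟫ ≤ 2 := by
  have h0 : (0:ℝ) ≤ ⟪β - γ, β - γ⟫ := real_inner_self_nonneg
  simp only [inner_sub_left, inner_sub_right, c.hlen β hβ, c.hlen γ hγ] at h0
  rw [real_inner_comm β γ] at h0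
  linarith

lemma inner_eq_one {β γ : V} (hβ : β ∈ c.Φ) (hγ : γ ∈ c.Φ) (hne : β ≠ γ)
    (h : 0 < ⟪β, γ⟫) : ⟪β, γ⟫ = 1 := by
  obtain ⟨n, hn⟩ := c.hint β hβ γ hγ
  have h2 : ⟪β, γ⟫ ≤ 2 := inner_le_two hβ hγ
  have hne2 : ⟪β, γ⟫ ≠ 2 := fun hh => hne (inner_eq_two hβ hγ hh)
  rw [hn] at h h2 hne2 ⊢
  have h1 : 0 < n := by exact_mod_cast h
  have h2' : n ≤ 2 := by exact_mod_cast h2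
  have h3 : n ≠ 2 := by exact_mod_cast hne2
  have : n = 1 := by omega
  rw [this]; norm_num


lemma measure_lt {β γ η : V} (hγ : γ ∈ c.Φ) (hpγ : c.Pos γ) (hpη : c.Pos η)
    (hsum : β = γ + η) :
    (c.Φ.filter (fun x => c.Pos x ∧ ⟪c.z, x⟫ < ⟪c.z, γ⟫)).card <
      (c.Φ.filter (fun x => c.Pos x ∧ ⟪c.z, x⟫ < ⟪c.z, β⟫)).card := by
  classical
  have hlt : ⟪c.z, γ⟫ < ⟪c.z, β⟫ := by
    rw [hsum, inner_add_right]
    have := hpη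
    rw [Pos] at this
    linarith
  apply Finset.card_lt_card
  constructor
  · intro x hx
    rw [Finset.mem_filter] at hx ⊢
    exact ⟨hx.1, hx.2.1, hx.2.2.trans hlt⟩
  · intro hsub
    have hγmem : γ ∈ c.Φ.filter (fun x => c.Pos x ∧ ⟪c.z, x⟫ < ⟪c.z, β⟫) :=
      Finset.mem_filter.2 ⟨hγ, hpγ, hlt⟩
    have := hsub hγmem
    rw [Finset.mem_filter] at this
    exact lt_irrefl _ this.2.2

lemma decomp {β : V} (hβ : β ∈ c.Φ) (hp : c.Pos β) :
    ∃ f : V → ℝ, (∀ x, 0 ≤ f x) ∧ (∀ x, f x ≠ 0 → c.Simple x) ∧ β = ∑ x ∈ c.Φ, f x • x := by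
  classical
  suffices H : ∀ n : ℕ, ∀ β, β ∈ c.Φ → c.Pos β →
      (c.Φ.filter (fun x => c.Pos x ∧ ⟪c.z, x⟫ < ⟪c.z, β⟫)).card ≤ n →
      ∃ f : V → ℝ, (∀ x, 0 ≤ f x) ∧ (∀ x, f x ≠ 0 → c.Simple x) ∧ β = ∑ x ∈ c.Φ, f x • x by
    exact H _ β hβ hp le_rfl
  intro n
  induction n using Nat.strong_induction_on with
  | _ n ih =>
  intro β hβ hp hm
  by_cases hsimp : c.Simple β
  · refine ⟨fun x => if x = β then 1 else 0, fun x => by positivity, ?_, ?_⟩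
    · intro x hx
      by_cases h : x = β
      · rwa [h]
      · simp [h] at hx
    · rw [Finset.sum_congr rfl (fun x _ => by rw [ite_smul, one_smul, zero_smul]),
        Finset.sum_ite_eq' c.Φ β]
      simp [hβ]
  · have hdec : ∃ γ ∈ c.Φ, ∃ η ∈ c.Φ, c.Pos γ ∧ c.Pos η ∧ β = γ + η := by
      by_contra h
      exact hsimp ⟨hβ, hp, h⟩
    obtain ⟨γ, hγ, η, hη, hpγ, hpη, hsum⟩ := hdec
    have hmγ := measure_lt hγ hpγ hpη hsum
    have hmη := measure_lt hη hpη hpγ (show β = η + γ by rw [hsum]; abel)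
    obtain ⟨f1, hf1n, hf1s, hf1⟩ :=
      ih _ (lt_of_lt_of_le hmγ hm) γ hγ hpγ le_rfl
    obtain ⟨f2, hf2n, hf2s, hf2⟩ :=
      ih _ (lt_of_lt_of_le hmη hm) η hη hpη le_rfl
    refine ⟨fun x => f1 x + f2 x, fun x => add_nonneg (hf1n x) (hf2n x), ?_, ?_⟩
    · intro x hx
      rcases em (f1 x = 0) with h1 | h1
      · apply hf2s; intro h2; exact hx (show f1 x + f2 x = 0 by rw [h1, h2, add_zero])
      · exact hf1s x h1
    · rw [hsum, hf1, hf2, ← Finset.sum_add_distrib]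
      exact Finset.sum_congr rfl fun x _ => (add_smul _ _ _).symm

lemma simple_inner_nonpos {δ₁ δ₂ : V} (h1 : c.Simple δ₁) (h2 : c.Simple δ₂) (hne : δ₁ ≠ δ₂) :
    ⟪δ₁, δ₂⟫ ≤ 0 := by
  by_contra h
  push_neg at h
  have hone : ⟪δ₁, δ₂⟫ = 1 := inner_eq_one h1.1 h2.1 hne h
  have hmem : δ₁ - δ₂ ∈ c.Φ := by
    have := c.hrefl δ₂ h2.1 δ₁ h1.1
    rwa [hone, one_smul] at this
  rcases pos_or hmem with hp | hp
  · exact h1.2.2 ⟨δ₁ - δ₂, hmem, δ₂, h2.1, hp, h2.2.1, by abel⟩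
  · rw [neg_sub] at hp
    exact h2.2.2 ⟨δ₂ - δ₁, by rw [← neg_sub]; exact c.hneg _ hmem, δ₁, h1.1, hp, h1.2.1, by abel⟩

lemma simple_reflect_pos {δ γ : V} (hδ : c.Simple δ) (hγ : γ ∈ c.Φ) (hp : c.Pos γ)
    (hne : γ ≠ δ) : c.Pos (c.s δ γ) := by
  classical
  have hδΦ := hδ.1
  have hmem : c.s δ γ ∈ c.Φ := s_maps hδΦ hγ
  rw [c.hs δ hδΦ]
  rcases le_or_gt ⟪γ, δ⟫ 0 with ht | ht
  · have h1 : 0 < ⟪c.z, γ⟫ := hp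
    have h2 : 0 < ⟪c.z, δ⟫ := hδ.2.1
    show 0 < ⟪c.z, γ - ⟪γ, δ⟫ • δ⟫
    rw [inner_sub_right, real_inner_smul_right]
    nlinarith
  · have hone : ⟪γ, δ⟫ = 1 := inner_eq_one hγ hδΦ hne ht
    rw [hone, one_smul]
    have hmem' : γ - δ ∈ c.Φ := by
      have := c.hrefl δ hδΦ γ hγ
      rwa [hone, one_smul] at this
    by_contra hnp
    have hneg' : ⟪c.z, γ - δ⟫ < 0 := not_pos hmem' hnp
    have hmem'' : δ - γ ∈ c.Φ := by
      have := c.hneg _ hmem'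
      rwa [neg_sub] at this
    have hpos'' : c.Pos (δ - γ) := by
      show 0 < ⟪c.z, δ - γ⟫
      rw [inner_sub_right] at hneg' ⊢
      linarith
    obtain ⟨f1, hf1n, hf1s, hf1⟩ := decomp hγ hp
    obtain ⟨f2, hf2n, hf2s, hf2⟩ := decomp hmem'' hpos''
    set e : V → ℝ := fun x => f1 x + f2 x with he
    have hen : ∀ x, 0 ≤ e x := fun x => add_nonneg (hf1n x) (hf2n x)
    have hes : ∀ x, e x ≠ 0 → c.Simple x := by
      intro x hx
      rcases em (f1 x = 0) with h1 | h1
      · apply hf2s; intro h2; exact hx (by rw [he]; simp [h1, h2])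
      · exact hf1s x h1
    have hesum : δ = ∑ x ∈ c.Φ, e x • x := by
      calc δ = γ + (δ - γ) := by abel
        _ = (∑ x ∈ c.Φ, f1 x • x) + (∑ x ∈ c.Φ, f2 x • x) := by rw [← hf1, ← hf2]
        _ = ∑ x ∈ c.Φ, e x • x := by
            rw [← Finset.sum_add_distrib]
            exact Finset.sum_congr rfl fun x _ => (add_smul _ _ _).symm
    -- inner with δ
    have hinner : ∑ x ∈ c.Φ, e x * ⟪x, δ⟫ = 2 := by
      have : ⟪δ, δ⟫ = (2:ℝ) := c.hlen δ hδΦ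
      calc ∑ x ∈ c.Φ, e x * ⟪x, δ⟫ = ⟪∑ x ∈ c.Φ, e x • x, δ⟫ := by
            rw [sum_inner]
            exact Finset.sum_congr rfl fun x _ => by rw [real_inner_smul_left]
        _ = 2 := by rw [← hesum, this]
    have hsplit := Finset.sum_eq_sum_sdiff_singleton_add hδΦ (fun x => e x * ⟪x, δ⟫)
    have hterm_nonpos : ∀ x ∈ c.Φ \ {δ}, e x * ⟪x, δ⟫ ≤ 0 := by
      intro x hx
      rw [Finset.mem_sdiff, Finset.mem_singleton] at hx
      rcases em (e x = 0) with h1 | h1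
      · rw [h1, zero_mul]
      · have hsx := hes x h1
        have := simple_inner_nonpos hsx hδ hx.2
        have := hen x
        nlinarith
    have hsum_nonpos : ∑ x ∈ c.Φ \ {δ}, e x * ⟪x, δ⟫ ≤ 0 :=
      Finset.sum_nonpos hterm_nonpos
    have heδ : 1 ≤ e δ := by
      rw [hsplit] at hinner
      rw [c.hlen δ hδΦ] at hinner
      linarith
    -- inner with z
    have hzinner : ∑ x ∈ c.Φ, e x * ⟪c.z, x⟫ = ⟪c.z, δ⟫ := by
      calc ∑ x ∈ c.Φ, e x * ⟪c.z, x⟫ = ⟪c.z, ∑ x ∈ c.Φ, e x • x⟫ := by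
            rw [inner_sum]
            exact Finset.sum_congr rfl fun x _ => by rw [real_inner_smul_right]
        _ = ⟪c.z, δ⟫ := by rw [← hesum]
    have hzsplit := Finset.sum_eq_sum_sdiff_singleton_add hδΦ (fun x => e x * ⟪c.z, x⟫)
    have hzterm_nonneg : ∀ x ∈ c.Φ \ {δ}, 0 ≤ e x * ⟪c.z, x⟫ := by
      intro x hx
      rcases em (e x = 0) with h1 | h1
      · rw [h1, zero_mul]
      · have hsx := hes x h1
        have h2 := hsx.2.1
        rw [Pos] at h2
        have := hen x
        positivity
    have hS_nonneg : 0 ≤ ∑ x ∈ c.Φ \ {δ}, e x * ⟪c.z, x⟫ :=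
      Finset.sum_nonneg hzterm_nonneg
    have hzδ : 0 < ⟪c.z, δ⟫ := hδ.2.1
    have hS_eq : ∑ x ∈ c.Φ \ {δ}, e x * ⟪c.z, x⟫ = (1 - e δ) * ⟪c.z, δ⟫ := by
      rw [hzsplit] at hzinner
      linarith
    have hS_zero : ∑ x ∈ c.Φ \ {δ}, e x * ⟪c.z, x⟫ = 0 := by
      have : (1 - e δ) * ⟪c.z, δ⟫ ≤ 0 := by nlinarith
      linarith [hS_eq]
    have hall_zero : ∀ x ∈ c.Φ \ {δ}, e x * ⟪c.z, x⟫ = 0 :=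
      (Finset.sum_eq_zero_iff_of_nonneg hzterm_nonneg).1 hS_zero
    have hf1_zero : ∀ x ∈ c.Φ \ {δ}, f1 x = 0 := by
      intro x hx
      have h1 := hall_zero x hx
      rcases em (e x = 0) with h2 | h2
      · have := hf1n x
        have := hf2n x
        rw [he] at h2
        simp only at h2
        linarith [hf1n x, hf2n x, h2]
      · have hsx := hes x h2
        have h3 := hsx.2.1
        rw [Pos] at h3
        exfalso
        have : e x ≠ 0 := h2
        rcases lt_or_eq_of_le (hen x) with h4 | h4
        · nlinarith
        · exact this h4.symm
    -- γ = f1 δ • δ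
    have hγδ : γ = f1 δ • δ := by
      rw [hf1, Finset.sum_eq_sum_sdiff_singleton_add hδΦ]
      rw [Finset.sum_eq_zero (fun x hx => by rw [hf1_zero x hx, zero_smul]), zero_add]
    have h2' : ⟪γ, δ⟫ = f1 δ * 2 := by
      rw [hγδ, real_inner_smul_left, c.hlen δ hδΦ]
    have hfδ : f1 δ = 1/2 := by rw [hone] at h2'; linarith
    have : ⟪γ, γ⟫ = (2:ℝ) := c.hlen γ hγ
    rw [hγδ, real_inner_smul_left, real_inner_smul_right, c.hlen δ hδΦ, hfδ] at this
    norm_num at this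

lemma exists_simple_neg {w : V ≃ₗ[ℝ] V} (hw : w ∈ c.W) {γ : V} (hγ : γ ∈ c.Φ)
    (hp : c.Pos γ) (hneg : ¬ c.Pos (w γ)) : ∃ δ, c.Simple δ ∧ ¬ c.Pos (w δ) := by
  by_contra h
  push_neg at h
  obtain ⟨f, hfn, hfs, hf⟩ := decomp hγ hp
  have hwγ : w γ = ∑ x ∈ c.Φ, f x • w x := by
    rw [hf, map_sum]
    exact Finset.sum_congr rfl fun x _ => by rw [map_smul]
  have hzw : ⟪c.z, w γ⟫ = ∑ x ∈ c.Φ, f x * ⟪c.z, w x⟫ := by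
    rw [hwγ, inner_sum]
    exact Finset.sum_congr rfl fun x _ => by rw [real_inner_smul_right]
  have hex : ∃ x ∈ c.Φ, f x ≠ 0 := by
    by_contra hno
    push_neg at hno
    have : γ = 0 := by
      rw [hf, Finset.sum_eq_zero]
      intro x hx
      rw [hno x hx, zero_smul]
    rw [this] at hγ
    exact c.h0 hγ
  obtain ⟨x0, hx0Φ, hx0⟩ := hex
  have hpos : 0 < ⟪c.z, w γ⟫ := by
    rw [hzw]
    apply Finset.sum_pos'
    · intro x _
      rcases em (f x = 0) with h1 | h1
      · rw [h1, zero_mul]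
      · have hsx := hfs x h1
        have hpwx := h _ hsx
        rw [Pos] at hpwx
        have := hfn x
        positivity
    · refine ⟨x0, hx0Φ, ?_⟩
      have hsx := hfs x0 hx0
      have hpwx := h _ hsx
      rw [Pos] at hpwx
      have h1 := hfn x0
      have h2 : 0 < f x0 := lt_of_le_of_ne h1 (Ne.symm hx0)
      positivity
  exact hneg hpos


lemma prod_simples_mem_W {l : List V} (hl : ∀ x ∈ l, c.Simple x) :
    (l.map c.s).prod ∈ c.W := by
  induction l with
  | nil => simp only [List.map_nil, List.prod_nil]; exact one_mem _
  | cons a t ih =>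
    rw [List.map_cons, List.prod_cons]
    exact mul_mem (s_mem_W (hl a (List.mem_cons_self)).1)
      (ih fun x hx => hl x (List.mem_cons_of_mem a hx))

lemma prod_inv {l : List V} (hl : ∀ x ∈ l, c.Simple x) :
    ((l.map c.s).prod)⁻¹ = (l.reverse.map c.s).prod := by
  induction l with
  | nil => simp
  | cons a t ih =>
    rw [List.map_cons, List.prod_cons, mul_inv_rev, List.reverse_cons, List.map_append,
      List.prod_append, ih fun x hx => hl x (List.mem_cons_of_mem a hx)]
    simp only [List.map_cons, List.map_nil, List.prod_cons, List.prod_nil, mul_one]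
    congr 1
    exact inv_eq_of_mul_eq_one_right (s_invol (hl a (List.mem_cons_self)).1)

lemma root_eq_prod {β : V} (hβ : β ∈ c.Φ) (hp : c.Pos β) :
    ∃ l : List V, ∃ δ : V, (∀ x ∈ l, c.Simple x) ∧ c.Simple δ ∧ β = (l.map c.s).prod δ := by
  suffices H : ∀ n : ℕ, ∀ β, β ∈ c.Φ → c.Pos β →
      (c.Φ.filter (fun x => c.Pos x ∧ ⟪c.z, x⟫ < ⟪c.z, β⟫)).card ≤ n →
      ∃ l : List V, ∃ δ : V, (∀ x ∈ l, c.Simple x) ∧ c.Simple δ ∧ β = (l.map c.s).prod δ by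
    exact H _ β hβ hp le_rfl
  intro n
  induction n using Nat.strong_induction_on with
  | _ n ih =>
  intro β hβ hp hm
  by_cases hsimp : c.Simple β
  · exact ⟨[], β, by simp, hsimp, by simp [LE.oneApply]⟩
  · obtain ⟨f, hfn, hfs, hf⟩ := decomp hβ hp
    have h2 : ∑ x ∈ c.Φ, f x * ⟪x, β⟫ = 2 := by
      calc ∑ x ∈ c.Φ, f x * ⟪x, β⟫ = ⟪∑ x ∈ c.Φ, f x • x, β⟫ := by
            rw [sum_inner]
            exact Finset.sum_congr rfl fun x _ => by rw [real_inner_smul_left]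
        _ = 2 := by rw [← hf, c.hlen β hβ]
    have hex : ∃ x ∈ c.Φ, 0 < f x * ⟪x, β⟫ := by
      by_contra hno
      push_neg at hno
      have := Finset.sum_nonpos hno
      linarith
    obtain ⟨x, hxΦ, hx⟩ := hex
    have hfx : 0 < f x := lt_of_le_of_ne (hfn x) (by
      intro h; rw [← h, zero_mul] at hx; exact lt_irrefl _ hx)
    have hxβ : 0 < ⟪x, β⟫ := by
      by_contra h
      push_neg at h
      nlinarith
    have hxs : c.Simple x := hfs x (ne_of_gt hfx)
    have hneq : x ≠ β := fun h => hsimp (h ▸ hxs)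
    have hone : ⟪x, β⟫ = 1 := inner_eq_one hxs.1 hβ hneq hxβ
    have hβx : ⟪β, x⟫ = 1 := (real_inner_comm β x).symm.trans hone
    have hmem' : β - x ∈ c.Φ := by
      have := c.hrefl x hxs.1 β hβ
      rwa [hβx, one_smul] at this
    have hsx : c.s x β = β - x := by
      rw [c.hs x hxs.1, hβx, one_smul]
    have hpos' : c.Pos (β - x) := by
      rw [← hsx]
      exact simple_reflect_pos hxs hβ hp (Ne.symm hneq)
    have hmlt := measure_lt hmem' hpos' hxs.2.1 (show β = (β - x) + x by abel)
    obtain ⟨l, δ, hls, hδs, hlδ⟩ :=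
      ih _ (lt_of_lt_of_le hmlt hm) (β - x) hmem' hpos' le_rfl
    have key : c.s x (β - x) = β := by
      rw [c.hs x hxs.1, inner_sub_left, hβx, c.hlen x hxs.1]
      module
    refine ⟨x :: l, δ, ?_, hδs, ?_⟩
    · intro y hy
      rcases List.mem_cons.1 hy with h | h
      · rwa [h]
      · exact hls y h
    · rw [List.map_cons, List.prod_cons, LE.mulApply, ← hlδ, key]

lemma refl_eq_prod {β : V} (hβ : β ∈ c.Φ) :
    ∃ l : List V, (∀ x ∈ l, c.Simple x) ∧ c.s β = (l.map c.s).prod := by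
  have main : ∀ γ, γ ∈ c.Φ → c.Pos γ →
      ∃ l : List V, (∀ x ∈ l, c.Simple x) ∧ c.s γ = (l.map c.s).prod := by
    intro γ hγ hp
    obtain ⟨l, δ, hls, hδs, hlδ⟩ := root_eq_prod hγ hp
    set u := (l.map c.s).prod with hu
    have huW : u ∈ c.W := prod_simples_mem_W hls
    have hconj : u * c.s δ * u⁻¹ = c.s γ := by
      rw [conj huW hδs.1, ← hlδ]
    refine ⟨l ++ [δ] ++ l.reverse, ?_, ?_⟩
    · intro y hy
      rcases List.mem_append.1 hy with h | h
      · rcases List.mem_append.1 h with h' | h'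
        · exact hls y h'
        · rw [List.mem_singleton.1 h']; exact hδs
      · exact hls y (List.mem_reverse.1 h)
    · rw [List.map_append, List.map_append, List.prod_append, List.prod_append,
        ← prod_inv hls, ← hconj]
      simp only [List.map_cons, List.map_nil, List.prod_cons, List.prod_nil, mul_one]
      rfl
  rcases pos_or hβ with hp | hp
  · exact main β hβ hp
  · obtain ⟨l, hls, hl⟩ := main (-β) (c.hneg β hβ) hp
    exact ⟨l, hls, by rw [← s_neg hβ, hl]⟩

lemma mem_W_prod {w : V ≃ₗ[ℝ] V} (hw : w ∈ c.W) :
    ∃ l : List V, (∀ x ∈ l, c.Simple x) ∧ w = (l.map c.s).prod := by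
  refine Subgroup.closure_induction ?_ ?_ ?_ ?_ hw
  · rintro g ⟨β, hβ, rfl⟩
    exact refl_eq_prod hβ
  · exact ⟨[], by simp, by simp⟩
  · rintro g h _ _ ⟨l1, hl1, rfl⟩ ⟨l2, hl2, rfl⟩
    refine ⟨l1 ++ l2, ?_, by rw [List.map_append, List.prod_append]⟩
    intro y hy
    rcases List.mem_append.1 hy with h | h
    · exact hl1 y h
    · exact hl2 y h
  · rintro g _ ⟨l, hl, rfl⟩
    refine ⟨l.reverse, fun y hy => hl y (List.mem_reverse.1 hy), prod_inv hl⟩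

lemma exchange {l : List V} {δ : V} (hl : ∀ x ∈ l, c.Simple x) (hδ : c.Simple δ)
    (hneg : ¬ c.Pos ((l.map c.s).prod δ)) :
    ∃ l' : List V, (∀ x ∈ l', c.Simple x) ∧ l'.length + 1 = l.length ∧
      (l.map c.s).prod * c.s δ = (l'.map c.s).prod := by
  induction l with
  | nil =>
    exfalso
    apply hneg
    simpa [LE.oneApply] using hδ.2.1
  | cons a t ih =>
    have ha : c.Simple a := hl a (List.mem_cons_self)
    have hts : ∀ x ∈ t, c.Simple x := fun x hx => hl x (List.mem_cons_of_mem a hx)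
    set u := (t.map c.s).prod with hu
    have huW : u ∈ c.W := prod_simples_mem_W hts
    have huδΦ : u δ ∈ c.Φ := W_maps huW hδ.1
    have hprod : ((a :: t).map c.s).prod = c.s a * u := by
      rw [List.map_cons, List.prod_cons]
    by_cases hup : c.Pos (u δ)
    · have hua : u δ = a := by
        by_contra hne
        apply hneg
        rw [hprod, LE.mulApply]
        exact simple_reflect_pos ha huδΦ hup hne
      have hconj : u * c.s δ * u⁻¹ = c.s a := by rw [conj huW hδ.1, hua]
      have hkey : (c.s a) * u = u * c.s δ := by
        rw [← hconj]
        group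
      refine ⟨t, hts, by simp, ?_⟩
      rw [hprod, mul_assoc, ← hkey, ← mul_assoc, s_invol ha.1, one_mul]
    · obtain ⟨t', ht's, ht'len, ht'⟩ := ih hts hup
      refine ⟨a :: t', ?_, ?_, ?_⟩
      · intro y hy
        rcases List.mem_cons.1 hy with h | h
        · rwa [h]
        · exact ht's y h
      · simp only [List.length_cons]
        omega
      · rw [hprod, mul_assoc, ht', List.map_cons, List.prod_cons]

lemma pos_preserving_eq_one {w : V ≃ₗ[ℝ] V} (hw : w ∈ c.W)
    (h : ∀ γ ∈ c.Φ, c.Pos γ → c.Pos (w γ)) : w = 1 := by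
  obtain ⟨l, hls, hl⟩ := mem_W_prod hw
  clear hw
  suffices H : ∀ n : ℕ, ∀ l : List V, l.length ≤ n → (∀ x ∈ l, c.Simple x) →
      ∀ w : V ≃ₗ[ℝ] V, w = (l.map c.s).prod →
      (∀ γ ∈ c.Φ, c.Pos γ → c.Pos (w γ)) → w = 1 by
    exact H l.length l le_rfl hls w hl h
  intro n
  induction n using Nat.strong_induction_on with
  | _ n ih =>
  intro l hlen hls w hl h
  rcases List.eq_nil_or_concat' l with rfl | ⟨t, δ, rfl⟩
  · simpa using hl
  · have hδ : c.Simple δ := hls δ (by simp)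
    have hts : ∀ x ∈ t, c.Simple x := fun x hx => hls x (by simp [hx])
    set u := (t.map c.s).prod with hu
    have hw' : w = u * c.s δ := by
      rw [hl, List.map_append, List.prod_append]
      simp [hu]
    have hwδ : c.Pos (w δ) := h δ hδ.1 hδ.2.1
    have hu' : u = w * c.s δ := by
      rw [hw', mul_assoc, s_invol hδ.1, mul_one]
    have huδval : u δ = -(w δ) := by
      rw [hu', LE.mulApply, s_apply_self hδ.1, map_neg]
    have huδ : ¬ c.Pos (u δ) := by
      rw [huδval]
      intro hcon
      have hcon' : (0:ℝ) < ⟪c.z, -(w δ)⟫ := hcon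
      rw [inner_neg_right] at hcon'
      have hwδ' : (0:ℝ) < ⟪c.z, w δ⟫ := hwδ
      linarith
    obtain ⟨t', ht's, ht'len, ht'⟩ := exchange hts hδ huδ
    have hwt' : w = (t'.map c.s).prod := by rw [hw', ← ht', hu]
    have hlenn : t.length + 1 ≤ n := by
      simpa using hlen
    exact ih t'.length (by omega) t' le_rfl ht's w hwt' h

lemma mem_N {w : V ≃ₗ[ℝ] V} {γ : V} :
    γ ∈ c.N w ↔ γ ∈ c.Φ ∧ 0 < ⟪c.z, γ⟫ ∧ ⟪c.z, w γ⟫ < 0 := by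
  simp [N, and_assoc]

lemma N_card_lt {w : V ≃ₗ[ℝ] V} (hw : w ∈ c.W) {δ : V} (hδ : c.Simple δ)
    (hneg : ¬ c.Pos (w δ)) : (c.N (w * c.s δ)).card < (c.N w).card := by
  classical
  have hδΦ := hδ.1
  have hδN : δ ∈ c.N w :=
    mem_N.2 ⟨hδΦ, hδ.2.1, not_pos (W_maps hw hδΦ) hneg⟩
  have himg : c.N (w * c.s δ) = ((c.N w).erase δ).image (c.s δ) := by
    ext γ
    rw [mem_N, Finset.mem_image]
    constructor
    · rintro ⟨hγΦ, hγp, hγn⟩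
      have hγδ : γ ≠ δ := by
        rintro rfl
        rw [LE.mulApply, s_apply_self hδΦ, map_neg, inner_neg_right] at hγn
        have : (0:ℝ) < ⟪c.z, w γ⟫ := by linarith
        exact hneg this
      refine ⟨c.s δ γ, Finset.mem_erase.2 ⟨?_, ?_⟩, s_s hδΦ γ⟩
      · intro hcon
        have : γ = -δ := by
          have := congrArg (c.s δ) hcon
          rwa [s_s hδΦ, s_apply_self hδΦ] at this
        rw [this] at hγp
        rw [inner_neg_right] at hγp
        have : (0:ℝ) < ⟪c.z, δ⟫ := hδ.2.1
        linarith
      · refine mem_N.2 ⟨s_maps hδΦ hγΦ, simple_reflect_pos hδ hγΦ hγp hγδ, ?_⟩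
        have : w (c.s δ γ) = (w * c.s δ) γ := rfl
        rw [this]
        exact hγn
    · rintro ⟨γ', hγ', rfl⟩
      rw [Finset.mem_erase, mem_N] at hγ'
      obtain ⟨hne, hγ'Φ, hγ'p, hγ'n⟩ := hγ'
      refine ⟨s_maps hδΦ hγ'Φ, simple_reflect_pos hδ hγ'Φ hγ'p hne, ?_⟩
      rw [LE.mulApply, s_s hδΦ]
      exact hγ'n
  rw [himg, Finset.card_image_of_injective _ (c.s δ).injective,
    Finset.card_erase_of_mem hδN]
  have : 0 < (c.N w).card := Finset.card_pos.2 ⟨δ, hδN⟩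
  omega

lemma stabilizer {α : V} (hα : α ∈ c.Φ) (hzα : ∀ β ∈ c.Φ, 0 < ⟪α, β⟫ → c.Pos β)
    {w : V ≃ₗ[ℝ] V} (hw : w ∈ c.W) (hfix : w α = α) :
    w ∈ Subgroup.closure
      {g : V ≃ₗ[ℝ] V | ∃ β ∈ c.Φ, (β = α ∨ β = -α ∨ ⟪α, β⟫ = 0) ∧ g = c.s β} := by
  set H := Subgroup.closure
    {g : V ≃ₗ[ℝ] V | ∃ β ∈ c.Φ, (β = α ∨ β = -α ∨ ⟪α, β⟫ = 0) ∧ g = c.s β} with hH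
  suffices Hyp : ∀ n : ℕ, ∀ w : V ≃ₗ[ℝ] V, w ∈ c.W → (c.N w).card ≤ n → w α = α → w ∈ H by
    exact Hyp _ w hw le_rfl hfix
  intro n
  induction n using Nat.strong_induction_on with
  | _ n ih =>
  intro w hw hcard hfix
  by_cases hN : c.N w = ∅
  · have : w = 1 := by
      apply pos_preserving_eq_one hw
      intro γ hγ hp
      have : γ ∉ c.N w := by rw [hN]; exact Finset.notMem_empty γ
      rw [mem_N] at this
      push_neg at this
      exact pos_of_not_neg (W_maps hw hγ) (not_lt.2 (this hγ hp))
    rw [this]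
    exact one_mem H
  · obtain ⟨γ, hγN⟩ := Finset.nonempty_of_ne_empty hN
    rw [mem_N] at hγN
    obtain ⟨hγΦ, hγp, hγn⟩ := hγN
    have hγnp : ¬ c.Pos (w γ) := fun h => absurd hγn (by
      have : (0:ℝ) < ⟪c.z, w γ⟫ := h
      linarith)
    obtain ⟨δ, hδs, hδn⟩ := exists_simple_neg hw hγΦ hγp hγnp
    have hδΦ := hδs.1
    -- δ is orthogonal to α
    have hge : 0 ≤ ⟪α, δ⟫ := by
      by_contra hcon
      push_neg at hcon
      have h1 : 0 < ⟪α, -δ⟫ := by rw [inner_neg_right]; linarith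
      have h2 : c.Pos (-δ) := hzα _ (c.hneg δ hδΦ) h1
      have h3 : (0:ℝ) < ⟪c.z, -δ⟫ := h2
      have h4 : (0:ℝ) < ⟪c.z, δ⟫ := hδs.2.1
      rw [inner_neg_right] at h3
      linarith
    have hwδΦ : w δ ∈ c.Φ := W_maps hw hδΦ
    have hle : ⟪α, δ⟫ ≤ 0 := by
      by_contra hcon
      push_neg at hcon
      have h1 : ⟪α, w δ⟫ = ⟪α, δ⟫ := by
        conv_lhs => rw [← hfix]
        exact W_inner hw α δ
      exact hδn (hzα _ hwδΦ (by rw [h1]; exact hcon))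
    have horth : ⟪α, δ⟫ = 0 := le_antisymm hle hge
    have hsδH : c.s δ ∈ H :=
      Subgroup.subset_closure ⟨δ, hδΦ, Or.inr (Or.inr horth), rfl⟩
    set w' := w * c.s δ with hw'
    have hw'W : w' ∈ c.W := mul_mem hw (s_mem_W hδΦ)
    have hw'fix : w' α = α := by
      rw [hw', LE.mulApply, c.hs δ hδΦ, horth, zero_smul, sub_zero, hfix]
    have hcard' : (c.N w').card < (c.N w).card := N_card_lt hw hδs hδn
    have hw'H : w' ∈ H := ih ((c.N w').card) (by omega) w' hw'W le_rfl hw'fix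
    have : w = w' * c.s δ := by
      rw [hw', mul_assoc, s_invol hδΦ, mul_one]
    rw [this]
    exact mul_mem hw'H hsδH

lemma orth_comm {β γ : V} (hβ : β ∈ c.Φ) (hγ : γ ∈ c.Φ) (h : ⟪β, γ⟫ = 0) :
    c.s β * c.s γ = c.s γ * c.s β := by
  have h' : ⟪γ, β⟫ = 0 := (real_inner_comm β γ).trans h
  refine LinearEquiv.toLinearMap_injective (LinearMap.ext fun v => ?_)
  simp only [LinearEquiv.coe_coe, LE.mulApply, c.hs β hβ, c.hs γ hγ, inner_sub_left,
    real_inner_smul_left]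
  rw [h, h']
  module

lemma comm_cases {α : V} (hα : α ∈ c.Φ) {w : V ≃ₗ[ℝ] V} (hw : w ∈ c.W)
    (hcomm : w * c.s α = c.s α * w) : w α = α ∨ w α = -α := by
  have h1 : -(w α) = w α - ⟪w α, α⟫ • α := by
    have h := congrArg (fun f : V ≃ₗ[ℝ] V => f α) hcomm
    simp only [LE.mulApply] at h
    rw [s_apply_self hα, map_neg, c.hs α hα (w α)] at h
    exact h
  have h2 : ⟪w α, α⟫ • α = w α + w α := by
    have h3 := congrArg (fun x : V => x + (w α + ⟪w α, α⟫ • α)) h1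
    rw [show -(w α) + (w α + ⟪w α, α⟫ • α) = ⟪w α, α⟫ • α by abel,
      show (w α - ⟪w α, α⟫ • α) + (w α + ⟪w α, α⟫ • α) = w α + w α by abel] at h3
    exact h3
  have hn : ⟪w α, w α⟫ = 2 := by rw [W_inner hw]; exact c.hlen α hα
  set t : ℝ := ⟪w α, α⟫ with htdef
  have h4 : t * t * 2 = 8 := by
    have := congrArg (fun x : V => ⟪x, x⟫) h2
    simp only [real_inner_smul_left, real_inner_smul_right, inner_add_left, inner_add_right,
      c.hlen α hα, hn] at this
    linarith
  have h5 : (t - 2) * (t + 2) = 0 := by nlinarith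
  rcases mul_eq_zero.1 h5 with h6 | h6
  · left
    have ht : t = 2 := by linarith
    have h7 : (2:ℝ) • α = (2:ℝ) • (w α) := by
      rw [show ((2:ℝ) • w α) = w α + w α from two_smul ℝ (w α), ← h2, ht]
    have := smul_right_injective V (two_ne_zero) h7
    exact this.symm
  · right
    have ht : t = -2 := by linarith
    have h7 : (2:ℝ) • (-α) = (2:ℝ) • (w α) := by
      rw [show ((2:ℝ) • w α) = w α + w α from two_smul ℝ (w α), ← h2, ht]
      module
    have := smul_right_injective V (two_ne_zero) h7
    exact this.symm

end Ctx

lemma exists_generic {V : Type*} [NormedAddCommGroup V] [InnerProductSpace ℝ V]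
    (S : Finset V) (h0 : (0 : V) ∉ S) : ∃ z : V, ∀ x ∈ S, ⟪z, x⟫ ≠ 0 := by
  classical
  induction S using Finset.induction_on with
  | empty => exact ⟨0, by simp⟩
  | @insert a S hamem ih =>
    obtain ⟨z, hz⟩ := ih (fun h => h0 (Finset.mem_insert_of_mem h))
    have ha0 : a ≠ 0 := fun h => h0 (h ▸ Finset.mem_insert_self a S)
    obtain ⟨ε, hε⟩ := Infinite.exists_notMem_finset
      ((insert a S).image (fun x => -⟪z, x⟫ / ⟪a, x⟫))
    refine ⟨z + ε • a, ?_⟩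
    intro x hx
    by_cases hax : ⟪a, x⟫ = 0
    · rcases Finset.mem_insert.1 hx with rfl | hxS
      · exact absurd (inner_self_eq_zero.1 hax) ha0
      · rw [inner_add_left, real_inner_smul_left, hax, mul_zero, add_zero]
        exact hz x hxS
    · intro hcon
      rw [inner_add_left, real_inner_smul_left] at hcon
      apply hε
      rw [Finset.mem_image]
      refine ⟨x, hx, ?_⟩
      rw [div_eq_iff hax]
      linarith

end Machinery

/-- For an irreducible simply laced root system `Φ` with Weyl group `W`
(generated by the reflections `s_β(v) = v - κ(v,β)β` for `β ∈ Φ`), the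
centralizer in `W` of the reflection `s_α` equals the subgroup generated by
the reflections `s_β` for `β = ±α` or `β ∈ Φ` orthogonal to `α`. -/
theorem centralizer_of_reflection (V : Type*) [NormedAddCommGroup V]
    [InnerProductSpace ℝ V] [FiniteDimensional ℝ V]
    (Φ : Finset V)
    (h0 : (0 : V) ∉ Φ)
    (hlen : ∀ α ∈ Φ, ⟪α, α⟫ = 2)
    (hneg : ∀ α ∈ Φ, -α ∈ Φ)
    (hred : ∀ α ∈ Φ, ∀ t : ℝ, t • α ∈ Φ → t = 1 ∨ t = -1)
    (hint : ∀ α ∈ Φ, ∀ β ∈ Φ, ∃ n : ℤ, ⟪α, β⟫ = n)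
    (hrefl : ∀ α ∈ Φ, ∀ β ∈ Φ, β - ⟪β, α⟫ • α ∈ Φ)
    (hirr : ∀ S ⊆ Φ, (∀ a ∈ S, ∀ b ∈ Φ, b ∉ S → ⟪a, b⟫ = 0) → S = ∅ ∨ S = Φ)
    -- the reflections `s_β` for `β ∈ Φ`, as linear automorphisms of `V`
    (s : V → (V ≃ₗ[ℝ] V))
    (hs : ∀ β ∈ Φ, ∀ v : V, s β v = v - ⟪v, β⟫ • β)
    -- the Weyl group
    (W : Subgroup (V ≃ₗ[ℝ] V))
    (hW : W = Subgroup.closure {g : V ≃ₗ[ℝ] V | ∃ β ∈ Φ, g = s β})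
    (α : V) (hα : α ∈ Φ) :
    {w : V ≃ₗ[ℝ] V | w ∈ W ∧ w * s α = s α * w}
      = ↑(Subgroup.closure
          {g : V ≃ₗ[ℝ] V | ∃ β ∈ Φ, (β = α ∨ β = -α ∨ ⟪α, β⟫ = 0) ∧ g = s β}) := by
  classical
  -- construct a generic adapted linear functional (as a vector z)
  obtain ⟨z0, hz0⟩ := exists_generic (Φ.filter (fun β => ⟪α, β⟫ = 0))
    (fun hmem => h0 (Finset.mem_filter.1 hmem).1)
  set t : ℝ := 1 + ∑ β ∈ Φ, |⟪z0, β⟫| with htdef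
  have htpos : 0 < t := by
    rw [htdef]
    have : (0:ℝ) ≤ ∑ β ∈ Φ, |⟪z0, β⟫| := Finset.sum_nonneg fun i _ => abs_nonneg _
    linarith
  have htgt : ∀ β ∈ Φ, |⟪z0, β⟫| < t := by
    intro β hβ
    have h1 : |⟪z0, β⟫| ≤ ∑ γ ∈ Φ, |⟪z0, γ⟫| :=
      Finset.single_le_sum (f := fun γ => |⟪z0, γ⟫|) (fun i _ => abs_nonneg _) hβ
    rw [htdef]; linarith
  set z : V := t • α + z0 with hzdef
  have hzval : ∀ β : V, ⟪z, β⟫ = t * ⟪α, β⟫ + ⟪z0, β⟫ := fun β => by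
    rw [hzdef, inner_add_left, real_inner_smul_left]
  have hzpos : ∀ β ∈ Φ, 0 < ⟪α, β⟫ → 0 < ⟪z, β⟫ := by
    intro β hβ hpos
    obtain ⟨n, hn⟩ := hint α hα β hβ
    have hn1 : (1:ℝ) ≤ ⟪α, β⟫ := by
      rw [hn] at hpos ⊢
      have : (0:ℤ) < n := by exact_mod_cast hpos
      exact_mod_cast this
    have habs := abs_lt.1 (htgt β hβ)
    rw [hzval]
    nlinarith
  have hznz : ∀ β ∈ Φ, ⟪z, β⟫ ≠ 0 := by
    intro β hβ
    rcases lt_trichotomy (⟪α, β⟫) 0 with hlt | heq | hgt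
    · have hβ' := hneg β hβ
      have h1 : 0 < ⟪z, -β⟫ := hzpos (-β) hβ' (by rw [inner_neg_right]; linarith)
      rw [inner_neg_right] at h1
      linarith
    · rw [hzval, heq, mul_zero, zero_add]
      exact hz0 β (Finset.mem_filter.2 ⟨hβ, heq⟩)
    · exact ne_of_gt (hzpos β hβ hgt)
  -- the bundled context
  have hWc : W = (Ctx.mk Φ z s h0 hlen hneg hint hrefl hs hznz).W := by
    rw [hW]; rfl
  ext w
  simp only [Set.mem_setOf_eq, SetLike.mem_coe]
  constructor
  · rintro ⟨hwW, hcomm⟩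
    have hwc : w ∈ (Ctx.mk Φ z s h0 hlen hneg hint hrefl hs hznz).W := by rwa [← hWc]
    rcases Ctx.comm_cases (c := Ctx.mk Φ z s h0 hlen hneg hint hrefl hs hznz) hα hwc hcomm
        with hfix | hfix
    · exact Ctx.stabilizer (c := Ctx.mk Φ z s h0 hlen hneg hint hrefl hs hznz)
        hα hzpos hwc hfix
    · have hsαW : s α ∈ (Ctx.mk Φ z s h0 hlen hneg hint hrefl hs hznz).W :=
        Ctx.s_mem_W (c := Ctx.mk Φ z s h0 hlen hneg hint hrefl hs hznz) hα
      have h2 : (s α * w) α = α := by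
        rw [LE.mulApply, hfix, map_neg,
          Ctx.s_apply_self (c := Ctx.mk Φ z s h0 hlen hneg hint hrefl hs hznz) hα, neg_neg]
      have h3 := Ctx.stabilizer (c := Ctx.mk Φ z s h0 hlen hneg hint hrefl hs hznz)
        hα hzpos (mul_mem hsαW hwc) h2
      have hsαH : s α ∈ Subgroup.closure
          {g : V ≃ₗ[ℝ] V | ∃ β ∈ Φ, (β = α ∨ β = -α ∨ ⟪α, β⟫ = 0) ∧ g = s β} :=
        Subgroup.subset_closure ⟨α, hα, Or.inl rfl, rfl⟩
      have h4 : w = s α * (s α * w) := by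
        rw [← mul_assoc,
          Ctx.s_invol (c := Ctx.mk Φ z s h0 hlen hneg hint hrefl hs hznz) hα, one_mul]
      rw [h4]
      exact mul_mem hsαH h3
  · intro hwH
    have hsub : {g : V ≃ₗ[ℝ] V | ∃ β ∈ Φ, (β = α ∨ β = -α ∨ ⟪α, β⟫ = 0) ∧ g = s β}
        ⊆ ↑(W ⊓ Subgroup.centralizer {s α}) := by
      rintro g ⟨β, hβ, hor, rfl⟩
      rw [SetLike.mem_coe, Subgroup.mem_inf]
      constructor
      · rw [hW]; exact Subgroup.subset_closure ⟨β, hβ, rfl⟩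
      · rw [Subgroup.mem_centralizer_iff]
        rintro h hh
        rw [Set.mem_singleton_iff] at hh
        subst hh
        rcases hor with rfl | rfl | hor
        · rfl
        · rw [show s (-α) = s α from
            Ctx.s_neg (c := Ctx.mk Φ z s h0 hlen hneg hint hrefl hs hznz) hα]
        · exact Ctx.orth_comm (c := Ctx.mk Φ z s h0 hlen hneg hint hrefl hs hznz)
            hα hβ hor
    have hmem := (Subgroup.closure_le _).2 hsub hwH
    rw [Subgroup.mem_inf] at hmem
    refine ⟨hmem.1, ?_⟩
    exact (Subgroup.mem_centralizer_iff.1 hmem.2 (s α) rfl).symm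
end

section
/- Let H be a Euclidean space containing a simply laced root system Φ (roots of squared length 2) and for each root α define j_α ∈ End(H) by j_α(h) = κ(h,α)α. Then under the Jordan product j • k = (jk+kj)/2 one has: j_α • j_β = 2j_α if α = ±β; j_α • j_β = 0 if κ(α,β) = 0; and j_α • j_β = (1/2)(j_α + j_β - j_{s_β(α)}) if κ(α,β) = ±1, where s_β(α) = α - κ(α,β)β. -/
open scoped RealInnerProductSpace

/-- For roots `α, β` of a simply laced root system (squared length 2) and the
rank-one symmetric operators `j_α(h) = κ(h,α)α`, under the Jordan product
`j • k = (jk+kj)/2` one has: `j_α • j_β = 2j_α` if `β = ±α`;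
`j_α • j_β = 0` if `κ(α,β) = 0`; and
`j_α • j_β = (1/2)(j_α + j_β - j_{s_β(α)})` if `κ(α,β) = ±1`,
where `s_β(α) = α - κ(α,β)β`. -/
theorem jordan_product_of_j (V : Type*) [NormedAddCommGroup V]
    [InnerProductSpace ℝ V] [FiniteDimensional ℝ V]
    (Φ : Finset V)
    (hlen : ∀ α ∈ Φ, ⟪α, α⟫ = 2)
    (j : V → Module.End ℝ V)
    (hj : ∀ β v : V, j β v = ⟪v, β⟫ • β)
    (α β : V) (hα : α ∈ Φ) (hβ : β ∈ Φ) :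
    ((β = α ∨ β = -α) →
        (2⁻¹ : ℝ) • (j α * j β + j β * j α) = (2 : ℝ) • j α) ∧
    (⟪α, β⟫ = 0 →
        (2⁻¹ : ℝ) • (j α * j β + j β * j α) = 0) ∧
    ((⟪α, β⟫ = 1 ∨ ⟪α, β⟫ = -1) →
        (2⁻¹ : ℝ) • (j α * j β + j β * j α)
          = (2⁻¹ : ℝ) • (j α + j β - j (α - ⟪α, β⟫ • β))) := by
  have hαα := hlen α hα
  refine ⟨?_, ?_, ?_⟩ <;> intro h
  · rcases h with rfl | rfl <;> ext v <;>
      simp only [LinearMap.smul_apply, LinearMap.add_apply, Module.End.mul_apply, hj,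
        real_inner_smul_left, inner_neg_neg, inner_neg_right, inner_neg_left, hαα,
        smul_smul, neg_smul, smul_neg] <;> module
  · ext v
    have hβα : ⟪β, α⟫ = 0 := by rw [real_inner_comm]; exact h
    simp [hj, h, hβα, real_inner_smul_left]
  · ext v
    have hβα : ⟪β, α⟫ = ⟪α, β⟫ := real_inner_comm α β
    rcases h with h | h <;>
      simp only [LinearMap.smul_apply, LinearMap.add_apply, LinearMap.sub_apply,
        Module.End.mul_apply, hj, real_inner_smul_left, inner_sub_left, inner_sub_right,
        real_inner_smul_right, smul_smul, smul_sub, sub_smul, hβα, h] <;>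
      match_scalars <;> ring
end

section
/- Let Φ be an irreducible simply laced root system in which every root β has exactly r positive roots α with κ(β,α) = ±1 (r independent of β by transitivity of the Weyl group). Then Σ_{α ∈ Φ⁺} j_α = ((4+r)/2)·id_H, where j_α(h) = κ(h,α)α. -/
open scoped RealInnerProductSpace

/-- Sum over a root system is twice the sum over a positive system, for even functions. -/
lemma sum_double_aux {V M : Type*} [NormedAddCommGroup V] [InnerProductSpace ℝ V]
    [AddCommMonoid M]
    (Φ Φp : Finset V) (hsub : Φp ⊆ Φ) (hneg : ∀ α ∈ Φ, -α ∈ Φ)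
    (hsplit : ∀ α ∈ Φ, (α ∈ Φp ↔ -α ∉ Φp))
    (F : V → M) (hF : ∀ α, F (-α) = F α) :
    ∑ α ∈ Φ, F α = ∑ α ∈ Φp, F α + ∑ α ∈ Φp, F α := by
  classical
  have hu : Φ = Φp ∪ Φp.image (fun a => -a) := by
    ext α
    simp only [Finset.mem_union, Finset.mem_image]
    constructor
    · intro hα
      by_cases h : α ∈ Φp
      · exact Or.inl h
      · refine Or.inr ⟨-α, ?_, by simp⟩
        by_contra hc
        exact h ((hsplit α hα).2 (by simpa using hc))
    · rintro (h | ⟨a, ha, rfl⟩)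
      · exact hsub h
      · exact hneg a (hsub ha)
  have hdisj : Disjoint Φp (Φp.image (fun a => -a)) := by
    rw [Finset.disjoint_left]
    rintro α hα hmem
    rcases Finset.mem_image.1 hmem with ⟨a, ha, rfl⟩
    exact ((hsplit a (hsub ha)).1 ha) (by simpa using hα)
  rw [hu, Finset.sum_union hdisj]
  congr 1
  rw [Finset.sum_image (by intro x _ y _ h; simpa using h)]
  exact Finset.sum_congr rfl fun a _ => hF a

/-- Let `Φ` be an irreducible simply laced root system spanning `H`, with
positive system `Φ⁺`, and suppose every root `β` has exactly `r` positive
roots `α` with `κ(β,α) = ±1`. Then `Σ_{α ∈ Φ⁺} j_α = ((4+r)/2)·id_H`, where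
`j_α(h) = κ(h,α)α`. -/
theorem sum_j_positive_roots (V : Type*) [NormedAddCommGroup V]
    [InnerProductSpace ℝ V] [FiniteDimensional ℝ V]
    (Φ : Finset V)
    (h0 : (0 : V) ∉ Φ)
    (hlen : ∀ α ∈ Φ, ⟪α, α⟫ = 2)
    (hneg : ∀ α ∈ Φ, -α ∈ Φ)
    (hred : ∀ α ∈ Φ, ∀ t : ℝ, t • α ∈ Φ → t = 1 ∨ t = -1)
    (hint : ∀ α ∈ Φ, ∀ β ∈ Φ, ∃ n : ℤ, ⟪α, β⟫ = n)
    (hrefl : ∀ α ∈ Φ, ∀ β ∈ Φ, β - ⟪β, α⟫ • α ∈ Φ)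
    (hirr : ∀ S ⊆ Φ, (∀ a ∈ S, ∀ b ∈ Φ, b ∉ S → ⟪a, b⟫ = 0) → S = ∅ ∨ S = Φ)
    (hspan : Submodule.span ℝ (↑Φ : Set V) = ⊤)
    (Φp : Finset V) (hsub : Φp ⊆ Φ)
    (hsplit : ∀ α ∈ Φ, (α ∈ Φp ↔ -α ∉ Φp))
    (hclosed : ∀ α ∈ Φp, ∀ β ∈ Φp, α + β ∈ Φ → α + β ∈ Φp)
    (j : V → Module.End ℝ V)
    (hj : ∀ β v : V, j β v = ⟪v, β⟫ • β)
    (r : ℕ)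
    (hr : ∀ β ∈ Φ,
      {α : V | α ∈ Φp ∧ (⟪β, α⟫ = 1 ∨ ⟪β, α⟫ = -1)}.ncard = r) :
    ∑ α ∈ Φp, j α = (((4 : ℝ) + r) / 2) • (1 : Module.End ℝ V) := by
  classical
  have key : ∀ β ∈ (↑Φ : Set V), (∑ α ∈ Φp, j α) β = (((4 : ℝ) + r) / 2) • β := by
    intro β hβ
    have hβΦ : β ∈ Φ := hβ
    -- the reflection in β
    set σ : V → V := fun v => v - ⟪v, β⟫ • β with hσ
    have hσΦ : ∀ α ∈ Φ, σ α ∈ Φ := fun α hα => hrefl β hβΦ α hα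
    have hinner_σ : ∀ α : V, ⟪σ α, β⟫ = -⟪α, β⟫ := by
      intro α
      simp only [hσ, inner_sub_left, real_inner_smul_left, hlen β hβΦ]
      ring
    have hinner_σ' : ∀ α : V, ⟪β, σ α⟫ = -⟪β, α⟫ := by
      intro α
      calc ⟪β, σ α⟫ = ⟪σ α, β⟫ := real_inner_comm _ _
        _ = -⟪α, β⟫ := hinner_σ α
        _ = -⟪β, α⟫ := by rw [real_inner_comm]
    have hσinv : ∀ α : V, σ (σ α) = α := by
      intro α
      have h1 : σ (σ α) = σ α - ⟪σ α, β⟫ • β := rfl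
      rw [h1, hinner_σ]
      simp only [hσ]
      module
    -- reindexing sums over Φ by σ
    have reindex : ∀ G : V → V, ∑ α ∈ Φ, G (σ α) = ∑ α ∈ Φ, G α := by
      intro G
      exact Finset.sum_nbij' σ σ hσΦ hσΦ (fun a _ => hσinv a) (fun a _ => hσinv a)
        (fun a _ => rfl)
    -- the full sum vector
    set w : V := ∑ α ∈ Φ, ⟪β, α⟫ • α with hw
    set c : ℝ := ∑ α ∈ Φ, ⟪β, α⟫ * ⟪α, β⟫ with hc
    -- σ w = -w
    have hGw : ∑ α ∈ Φ, ⟪β, α⟫ • σ α = -w := by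
      calc ∑ α ∈ Φ, ⟪β, α⟫ • σ α
          = ∑ α ∈ Φ, ⟪β, σ (σ α)⟫ • σ α := by
            refine Finset.sum_congr rfl fun a _ => by rw [hσinv]
        _ = ∑ α ∈ Φ, ⟪β, σ α⟫ • α := reindex (fun α => ⟪β, σ α⟫ • α)
        _ = ∑ α ∈ Φ, (-⟪β, α⟫) • α := by
            refine Finset.sum_congr rfl fun a _ => by rw [hinner_σ' a]
        _ = -w := by rw [hw, ← Finset.sum_neg_distrib]; simp [neg_smul]
    have hGw' : ∑ α ∈ Φ, ⟪β, α⟫ • σ α = w - c • β := by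
      simp only [hσ, smul_sub, Finset.sum_sub_distrib, hw, hc, smul_smul]
      rw [← Finset.sum_smul]
    have htwo : w + w = c • β := by
      have := hGw'.symm.trans hGw
      -- w - c • β = -w
      linear_combination (norm := module) this
    -- compute c
    have habs : ∀ α ∈ Φ, ⟪β, α⟫ * ⟪β, α⟫ ≤ 4 := by
      intro α hα
      have := real_inner_mul_inner_self_le β α
      rw [hlen β hβΦ, hlen α hα] at this
      linarith
    have hzero_of : ∀ α ∈ Φ, α ≠ β → α ≠ -β → ¬(⟪β, α⟫ = 1 ∨ ⟪β, α⟫ = -1) → ⟪β, α⟫ = 0 := by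
      intro α hα hne1 hne2 hno
      obtain ⟨n, hn⟩ := hint β hβΦ α hα
      have hb : n * n ≤ 4 := by
        have := habs α hα
        rw [hn] at this
        exact_mod_cast this
      have h2 : n ≠ 2 := by
        rintro rfl
        apply hne1
        have hn1 : ⟪β, α⟫ = (2 : ℝ) := by rw [hn]; norm_num
        have hn2 : ⟪α, β⟫ = (2 : ℝ) := by rw [real_inner_comm]; exact hn1
        have hz : ⟪β - α, β - α⟫ = 0 := by
          simp only [inner_sub_left, inner_sub_right]
          linarith [hlen β hβΦ, hlen α hα, hn1, hn2]
        have := inner_self_eq_zero.1 hz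
        rw [sub_eq_zero] at this
        exact this.symm
      have hm2 : n ≠ -2 := by
        rintro rfl
        apply hne2
        have hn1 : ⟪β, α⟫ = (-2 : ℝ) := by rw [hn]; norm_num
        have hn2 : ⟪α, β⟫ = (-2 : ℝ) := by rw [real_inner_comm]; exact hn1
        have hz : ⟪β + α, β + α⟫ = 0 := by
          simp only [inner_add_left, inner_add_right]
          linarith [hlen β hβΦ, hlen α hα, hn1, hn2]
        have h0' := inner_self_eq_zero.1 hz
        linear_combination (norm := module) h0'
      have h1 : n ≠ 1 := by rintro rfl; exact hno (Or.inl (by rw [hn]; norm_num))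
      have hm1 : n ≠ -1 := by rintro rfl; exact hno (Or.inr (by rw [hn]; norm_num))
      have hge : -2 ≤ n := by nlinarith
      have hle : n ≤ 2 := by nlinarith
      have : n = 0 := by omega
      rw [hn, this]; norm_num
    -- the sum of squares over Φp equals 4 + r
    have hsq : ∑ α ∈ Φp, ⟪β, α⟫ * ⟪β, α⟫ = 4 + r := by
      set P1 : Finset V := Φp.filter (fun α => α = β ∨ α = -β) with hP1
      set P2 : Finset V := Φp.filter (fun α => ⟪β, α⟫ = 1 ∨ ⟪β, α⟫ = -1) with hP2
      have hdisj12 : Disjoint P1 P2 := by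
        rw [Finset.disjoint_left]
        intro α h1 h2
        obtain ⟨-, h1'⟩ := Finset.mem_filter.1 h1
        obtain ⟨-, h2'⟩ := Finset.mem_filter.1 h2
        have hv : ⟪β, α⟫ = 2 ∨ ⟪β, α⟫ = -2 := by
          rcases h1' with h | h
          · left; rw [h]; exact hlen β hβΦ
          · right; rw [h, inner_neg_right, hlen β hβΦ]
        rcases hv with h | h <;> rcases h2' with h' | h' <;> rw [h] at h' <;> norm_num at h'
      have hsum1 : ∑ α ∈ P1, ⟪β, α⟫ * ⟪β, α⟫ = 4 := by
        have hβne : β ≠ -β := by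
          intro h
          have h2 : (2 : ℝ) • β = 0 := by
            rw [two_smul]
            linear_combination (norm := module) h
          have : β = 0 := by
            have := smul_eq_zero.1 h2
            rcases this with h | h
            · norm_num at h
            · exact h
          rw [this] at hβΦ
          exact h0 hβΦ
        by_cases hmem : β ∈ Φp
        · have : P1 = {β} := by
            ext α
            simp only [hP1, Finset.mem_filter, Finset.mem_singleton]
            constructor
            · rintro ⟨hαp, (rfl | rfl)⟩
              · rfl
              · exact absurd hαp ((hsplit β hβΦ).1 hmem)
            · rintro rfl; exact ⟨hmem, Or.inl rfl⟩
          rw [this, Finset.sum_singleton, hlen β hβΦ]; norm_num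
        · have hmβ : -β ∈ Φp := by
            by_contra hc
            exact hmem ((hsplit β hβΦ).2 hc)
          have : P1 = {-β} := by
            ext α
            simp only [hP1, Finset.mem_filter, Finset.mem_singleton]
            constructor
            · rintro ⟨hαp, (rfl | rfl)⟩
              · exact absurd hαp hmem
              · rfl
            · rintro rfl; exact ⟨hmβ, Or.inr rfl⟩
          rw [this, Finset.sum_singleton, inner_neg_right, hlen β hβΦ]; norm_num
      have hsum2 : ∑ α ∈ P2, ⟪β, α⟫ * ⟪β, α⟫ = r := by
        have hcard : P2.card = r := by
          have := hr β hβΦ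
          have hset : {α : V | α ∈ Φp ∧ (⟪β, α⟫ = 1 ∨ ⟪β, α⟫ = -1)} = (↑P2 : Set V) := by
            ext α; simp [hP2, Finset.mem_filter]
          rw [hset, Set.ncard_coe_finset] at this
          exact this
        have : ∀ α ∈ P2, ⟪β, α⟫ * ⟪β, α⟫ = 1 := by
          intro α hα
          rcases (Finset.mem_filter.1 hα).2 with h | h <;> rw [h] <;> norm_num
        rw [Finset.sum_congr rfl this, Finset.sum_const, hcard]
        simp
      have hsubset : P1 ∪ P2 ⊆ Φp := by
        intro α hα
        rcases Finset.mem_union.1 hα with h | h <;> exact (Finset.mem_filter.1 h).1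
      have hrest : ∀ α ∈ Φp, α ∉ P1 ∪ P2 → ⟪β, α⟫ * ⟪β, α⟫ = 0 := by
        intro α hα hno
        rw [Finset.mem_union, not_or] at hno
        have h1 : ¬(α = β ∨ α = -β) := fun h => hno.1 (Finset.mem_filter.2 ⟨hα, h⟩)
        have h2 : ¬(⟪β, α⟫ = 1 ∨ ⟪β, α⟫ = -1) := fun h => hno.2 (Finset.mem_filter.2 ⟨hα, h⟩)
        push_neg at h1
        rw [hzero_of α (hsub hα) h1.1 h1.2 h2]
        ring
      rw [← Finset.sum_subset hsubset hrest, Finset.sum_union hdisj12, hsum1, hsum2]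
    have hcval : c = 2 * (4 + r) := by
      have heq : ∑ α ∈ Φ, ⟪β, α⟫ * ⟪α, β⟫ =
          (∑ α ∈ Φp, ⟪β, α⟫ * ⟪α, β⟫) + ∑ α ∈ Φp, ⟪β, α⟫ * ⟪α, β⟫ := by
        apply sum_double_aux Φ Φp hsub hneg hsplit
        intro α
        rw [inner_neg_right, inner_neg_left]
        ring
      have hcomm : ∀ α : V, ⟪β, α⟫ * ⟪α, β⟫ = ⟪β, α⟫ * ⟪β, α⟫ := by
        intro α; rw [real_inner_comm α β]
      simp only [hcomm] at heq
      rw [hc]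
      simp only [hcomm]
      rw [heq, hsq]
      ring
    -- w = (4 + r) • β
    have hwval : w = ((4 : ℝ) + r) • β := by
      have := htwo
      rw [hcval] at this
      have h2 : (2 : ℝ) • w = (2 : ℝ) • (((4 : ℝ) + r) • β) := by
        rw [two_smul, this, smul_smul]
      exact smul_right_injective V (by norm_num : (2 : ℝ) ≠ 0) h2
    -- relate w to the sum over Φp
    have hTβ : (∑ α ∈ Φp, j α) β = ∑ α ∈ Φp, ⟪β, α⟫ • α := by
      rw [LinearMap.coe_sum, Finset.sum_apply]
      exact Finset.sum_congr rfl fun α _ => hj α β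
    have hwT : w = (∑ α ∈ Φp, ⟪β, α⟫ • α) + ∑ α ∈ Φp, ⟪β, α⟫ • α := by
      rw [hw]
      apply sum_double_aux Φ Φp hsub hneg hsplit
      intro α
      rw [inner_neg_right, neg_smul, smul_neg, neg_neg]
    have := hwT.symm.trans hwval
    rw [hTβ]
    have hfin : (∑ α ∈ Φp, ⟪β, α⟫ • α) + ∑ α ∈ Φp, ⟪β, α⟫ • α = ((4 : ℝ) + r) • β := this
    have h2 : (2 : ℝ) • (∑ α ∈ Φp, ⟪β, α⟫ • α) = (2 : ℝ) • ((((4 : ℝ) + r) / 2) • β) := by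
      rw [two_smul, hfin, smul_smul]
      congr 1
      ring
    exact smul_right_injective V (by norm_num : (2 : ℝ) ≠ 0) h2
  apply LinearMap.ext_on hspan
  intro β hβ
  rw [key β hβ]
  simp
end
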